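/- arXiv:1808.01588 — 3 statements merged into one kernel-verified Lean document; each statement's English description precedes it below -/
import Mathlib

section
/- Let τ be a countable language and 𝕂 a class of τ-structures closed under isomorphism. If 𝕂 is the class of all models of a ⩕-sentence, then 𝕂 is a PC'_Δ-class, and hence a PC_Δ-class. -/
universe u

open FirstOrder Language

namespace PaperCDH

variable {L : FirstOrder.Language.{u, u}}

/-- Infinitary `L_{ω₁ω}`-style formulas with free and bound variables indexed by `ℕ`,
including finitary connectives and countably infinite conjunctions and disjunctions. -/
inductive Linf (L : FirstOrder.Language.{u, u}) : Type u where
  | fls : Linf L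
  | equal : L.Term ℕ → L.Term ℕ → Linf L
  | rel : {n : ℕ} → L.Relations n → (Fin n → L.Term ℕ) → Linf L
  | not : Linf L → Linf L
  | and : Linf L → Linf L → Linf L
  | or : Linf L → Linf L → Linf L
  | ex : ℕ → Linf L → Linf L
  | all : ℕ → Linf L → Linf L
  | iConj : (ℕ → Linf L) → Linf L
  | iDisj : (ℕ → Linf L) → Linf L

namespace Linf

/-- The set of free variables of an infinitary formula. -/
def freeVars : Linf L → Set ℕ
  | .fls => ∅
  | .equal t u => ↑(t.varFinset ∪ u.varFinset)
  | .rel _ ts => ⋃ i, ↑((ts i).varFinset)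
  | .not φ => φ.freeVars
  | .and φ ψ => φ.freeVars ∪ ψ.freeVars
  | .or φ ψ => φ.freeVars ∪ ψ.freeVars
  | .ex i φ => φ.freeVars \ {i}
  | .all i φ => φ.freeVars \ {i}
  | .iConj f => ⋃ n, (f n).freeVars
  | .iDisj f => ⋃ n, (f n).freeVars

/-- Satisfaction of an infinitary formula in an `L`-structure, relative to a
valuation of the variables. -/
def Realize {M : Type u} [L.Structure M] : Linf L → (ℕ → M) → Prop
  | .fls, _ => False
  | .equal t u, v => t.realize v = u.realize v
  | .rel R ts, v => Structure.RelMap R fun i => (ts i).realize v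
  | .not φ, v => ¬ φ.Realize v
  | .and φ ψ, v => φ.Realize v ∧ ψ.Realize v
  | .or φ ψ, v => φ.Realize v ∨ ψ.Realize v
  | .ex i φ, v => ∃ a : M, φ.Realize (Function.update v i a)
  | .all i φ, v => ∀ a : M, φ.Realize (Function.update v i a)
  | .iConj f, v => ∀ n, (f n).Realize v
  | .iDisj f, v => ∃ n, (f n).Realize v

/-- A (nonempty) structure satisfies a sentence if it is realized under every
(equivalently, some) valuation. -/
def Sat (M : Type u) [L.Structure M] (φ : Linf L) : Prop :=
  ∀ v : ℕ → M, φ.Realize v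

/-- Well-formed `L_{ω₁ω}`-formulas: at each infinitary conjunction or disjunction, the
conjuncts/disjuncts have finitely many free variables in total. -/
inductive WF : Linf L → Prop
  | fls : WF .fls
  | equal (t u : L.Term ℕ) : WF (.equal t u)
  | rel {n : ℕ} (R : L.Relations n) (ts : Fin n → L.Term ℕ) : WF (.rel R ts)
  | not {φ} : WF φ → WF (.not φ)
  | and {φ ψ} : WF φ → WF ψ → WF (.and φ ψ)
  | or {φ ψ} : WF φ → WF ψ → WF (.or φ ψ)
  | ex {φ} (i : ℕ) : WF φ → WF (.ex i φ)
  | all {φ} (i : ℕ) : WF φ → WF (.all i φ)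
  | iConj {f : ℕ → Linf L} : (∀ n, WF (f n)) → (⋃ n, (f n).freeVars).Finite → WF (.iConj f)
  | iDisj {f : ℕ → Linf L} : (∀ n, WF (f n)) → (⋃ n, (f n).freeVars).Finite → WF (.iDisj f)

/-- Finitary quantifier-free formulas. -/
inductive QF : Linf L → Prop
  | fls : QF .fls
  | equal (t u : L.Term ℕ) : QF (.equal t u)
  | rel {n : ℕ} (R : L.Relations n) (ts : Fin n → L.Term ℕ) : QF (.rel R ts)
  | not {φ} : QF φ → QF (.not φ)
  | and {φ ψ} : QF φ → QF ψ → QF (.and φ ψ)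
  | or {φ ψ} : QF φ → QF ψ → QF (.or φ ψ)

/-- The `⩕`-formulas: built from finitary quantifier-free formulas by quantification
and countable conjunctions (of families with finitely many free variables in total),
with no infinitary disjunctions. -/
inductive IsWedge : Linf L → Prop
  | qf {φ} : QF φ → IsWedge φ
  | ex {φ} (i : ℕ) : IsWedge φ → IsWedge (.ex i φ)
  | all {φ} (i : ℕ) : IsWedge φ → IsWedge (.all i φ)
  | iConj {f : ℕ → Linf L} : (∀ n, IsWedge (f n)) → (⋃ n, (f n).freeVars).Finite →
      IsWedge (.iConj f)

end Linf

/-- A class of `L`-structures (in universe `u`), given as a predicate on structures. -/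
def StructClass (L : FirstOrder.Language.{u, u}) : Type (u + 1) :=
  ∀ (M : Type u), L.Structure M → Prop

/-- A class of structures is closed under isomorphism. -/
def ClosedUnderIso (K : StructClass L) : Prop :=
  ∀ (M N : Type u) (iM : L.Structure M) (iN : L.Structure N),
    Nonempty M → Nonempty (@FirstOrder.Language.Equiv L M N iM iN) → (K M iM ↔ K N iN)

/-- `K` is the class of all models of the `L_{ω₁ω}`-sentence `φ`
(among nonempty structures). -/
def Axiomatizes (φ : Linf L) (K : StructClass L) : Prop :=
  φ.WF ∧ φ.freeVars = ∅ ∧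
    ∀ (M : Type u) (iM : L.Structure M), Nonempty M → (K M iM ↔ @Linf.Sat L M iM φ)

/-- `K` is `L_{ω₁ω}`-elementary: the class of all models of a single
`L_{ω₁ω}`-sentence. -/
def IsLw1wElementary (K : StructClass L) : Prop :=
  ∃ φ : Linf L, Axiomatizes φ K

/-- `K` is the class of all models of a single `⩕`-sentence. -/
def IsWedgeElementary (K : StructClass L) : Prop :=
  ∃ φ : Linf L, φ.IsWedge ∧ φ.freeVars = ∅ ∧
    ∀ (M : Type u) (iM : L.Structure M), Nonempty M → (K M iM ↔ @Linf.Sat L M iM φ)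

/-- `K` is a `PC_Δ`-class: there is an expansion `L.sum L'` of the language by (countably
many) new symbols and a first-order theory `T` in the expanded language such that the
members of `K` are exactly the structures admitting an expansion to a model of `T`. -/
def IsPCDelta (K : StructClass L) : Prop :=
  ∃ (L' : FirstOrder.Language.{u, u}), Countable L'.Symbols ∧
    ∃ T : (L.sum L').Theory,
      ∀ (M : Type u) (iM : L.Structure M), Nonempty M →
        (K M iM ↔ ∃ iM' : L'.Structure M,
          @Theory.Model (L.sum L') M (@FirstOrder.Language.sumStructure L L' M iM iM') T)

/-- `K` is a `PC`-class: as `IsPCDelta`, but with a single first-order sentence. -/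
def IsPC (K : StructClass L) : Prop :=
  ∃ (L' : FirstOrder.Language.{u, u}), Countable L'.Symbols ∧
    ∃ φ : (L.sum L').Sentence,
      ∀ (M : Type u) (iM : L.Structure M), Nonempty M →
        (K M iM ↔ ∃ iM' : L'.Structure M,
          @Sentence.Realize (L.sum L') M (@FirstOrder.Language.sumStructure L L' M iM iM') φ)

/-- The members of `K` are (up to isomorphism) exactly the structures of the form `A_P`:
the substructure of the `L`-reduct of `A` whose domain is the interpretation of the unary
predicate `P`, where `A` ranges over models of `T` for which this set is closed under the
interpretations of the function and constant symbols of `L`. -/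
def PCPrimeWitness (L' : FirstOrder.Language.{u, u}) (P : L'.Relations 1)
    (T : Set ((L.sum L').Sentence)) (K : StructClass L) : Prop :=
  ∀ (M : Type u) (iM : L.Structure M), Nonempty M →
    (K M iM ↔ ∃ (A : Type u) (iA : (L.sum L').Structure A),
      @Theory.Model (L.sum L') A iA T ∧
      ∃ S : @Substructure L A (@LHom.reduct L (L.sum L') LHom.sumInl A iA),
        ((S : Set A) = {a | @Structure.RelMap (L.sum L') A iA 1 (Sum.inr P) ![a]}) ∧
        Nonempty (@FirstOrder.Language.Equiv L M S iM
          (@Substructure.inducedStructure L A (@LHom.reduct L (L.sum L') LHom.sumInl A iA) S)))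

/-- `K` is a `PC'_Δ`-class. -/
def IsPCDelta' (K : StructClass L) : Prop :=
  ∃ (L' : FirstOrder.Language.{u, u}), Countable L'.Symbols ∧
    ∃ (P : L'.Relations 1) (T : (L.sum L').Theory), PCPrimeWitness L' P T K

/-- `K` is a `PC'`-class: as `IsPCDelta'` but with a single first-order sentence. -/
def IsPC' (K : StructClass L) : Prop :=
  ∃ (L' : FirstOrder.Language.{u, u}), Countable L'.Symbols ∧
    ∃ (P : L'.Relations 1) (φ : (L.sum L').Sentence), PCPrimeWitness L' P {φ} K


/-! ### Auxiliary development -/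

section Aux

open Linf

variable {L : FirstOrder.Language.{u, u}}

/-- Realization of a term only depends on the values of its variables. -/
theorem term_realize_congr {M : Type u} [L.Structure M] (t : L.Term ℕ) {v w : ℕ → M}
    (h : ∀ i ∈ t.varFinset, v i = w i) : t.realize v = t.realize w := by
  induction t with
  | var i => exact h i (by simp [Term.varFinset])
  | func f ts ih =>
    simp only [Term.realize]
    congr 1
    funext i
    exact ih i fun j hj => h j (by
      simp only [Term.varFinset, Finset.mem_biUnion]
      exact ⟨i, Finset.mem_univ i, hj⟩)

/-- Realization of an infinitary formula only depends on the values of its free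
variables. -/
theorem linf_realize_congr {M : Type u} [L.Structure M] :
    ∀ (ψ : Linf L) (v w : ℕ → M), (∀ i ∈ ψ.freeVars, v i = w i) →
      (ψ.Realize v ↔ ψ.Realize w) := by
  intro ψ
  induction ψ with
  | fls => exact fun _ _ _ => Iff.rfl
  | equal t u =>
    intro v w h
    simp only [freeVars, Finset.coe_union, Set.mem_union, Finset.mem_coe] at h
    simp only [Realize]
    rw [term_realize_congr t fun i hi => h i (Or.inl hi),
      term_realize_congr u fun i hi => h i (Or.inr hi)]
  | rel R ts =>
    intro v w h
    simp only [freeVars, Set.mem_iUnion, Finset.mem_coe] at h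
    simp only [Realize]
    have : (fun i => (ts i).realize v) = fun i => (ts i).realize w := by
      funext i
      exact term_realize_congr (ts i) fun j hj => h j ⟨i, hj⟩
    rw [this]
  | not ψ ih =>
    intro v w h
    simp only [Realize]
    rw [ih v w h]
  | and ψ χ ih₁ ih₂ =>
    intro v w h
    simp only [freeVars, Set.mem_union] at h
    simp only [Realize]
    rw [ih₁ v w fun i hi => h i (Or.inl hi), ih₂ v w fun i hi => h i (Or.inr hi)]
  | or ψ χ ih₁ ih₂ =>
    intro v w h
    simp only [freeVars, Set.mem_union] at h
    simp only [Realize]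
    rw [ih₁ v w fun i hi => h i (Or.inl hi), ih₂ v w fun i hi => h i (Or.inr hi)]
  | ex j ψ ih =>
    intro v w h
    simp only [freeVars, Set.mem_diff, Set.mem_singleton_iff] at h
    simp only [Realize]
    refine exists_congr fun x => ih _ _ fun i hi => ?_
    by_cases hij : i = j
    · subst hij; simp
    · simp only [Function.update, dif_neg hij]
      exact h i ⟨hi, hij⟩
  | all j ψ ih =>
    intro v w h
    simp only [freeVars, Set.mem_diff, Set.mem_singleton_iff] at h
    simp only [Realize]
    refine forall_congr' fun x => ih _ _ fun i hi => ?_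
    by_cases hij : i = j
    · subst hij; simp
    · simp only [Function.update, dif_neg hij]
      exact h i ⟨hi, hij⟩
  | iConj f ih =>
    intro v w h
    simp only [freeVars, Set.mem_iUnion] at h
    simp only [Realize]
    exact forall_congr' fun n => ih n _ _ fun i hi => h i ⟨n, hi⟩
  | iDisj f ih =>
    intro v w h
    simp only [freeVars, Set.mem_iUnion] at h
    simp only [Realize]
    exact exists_congr fun n => ih n _ _ fun i hi => h i ⟨n, hi⟩

/-- The auxiliary language: no function symbols, and for each arity the relation symbols
are indexed by `List ℕ ⊕ Unit` (addresses of subformulas, plus one extra predicate). -/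
def wedgeLang : FirstOrder.Language.{u, u} where
  Functions _ := PEmpty
  Relations _ := ULift.{u} (List ℕ ⊕ Unit)

instance : Countable (wedgeLang.{u}).Symbols :=
  inferInstanceAs (Countable ((Σ _ : ℕ, PEmpty.{u + 1}) ⊕ (Σ _ : ℕ, ULift.{u} (List ℕ ⊕ Unit))))

/-- One step of descending into a formula. -/
def child (m : ℕ) : Linf L → Linf L
  | .ex _ ψ => ψ
  | .all _ ψ => ψ
  | .iConj f => f m
  | ψ => ψ

/-- The subformula at a given (reversed) address. -/
def node (φ : Linf L) : List ℕ → Linf L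
  | [] => φ
  | m :: p => child m (node φ p)

/-- The context (list of quantified variables, innermost first) at a given address. -/
def nctx (φ : Linf L) : List ℕ → List ℕ
  | [] => []
  | _ :: p =>
    match node φ p with
    | .ex i _ => i :: nctx φ p
    | .all i _ => i :: nctx φ p
    | _ => nctx φ p

/-- Where each variable lives in a context (with a junk slot for unbound variables). -/
def vmap : (c : List ℕ) → ℕ → Fin (c.length + 1)
  | [], _ => 0
  | i :: c, j => if j = i then 0 else (vmap c j).succ

theorem cons_vmap {M : Type u} (c : List ℕ) (i : ℕ) (a : Fin (c.length + 1) → M) (x : M) :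
    (fun j => (Fin.cons x a : Fin ((i :: c).length + 1) → M) (vmap (i :: c) j))
      = Function.update (fun j => a (vmap c j)) i x := by
  funext j
  by_cases hj : j = i
  · subst hj; simp [vmap]
  · simp [vmap, hj, Function.update, Fin.cons_succ]

theorem snoc_comp_cons {M : Type u} {k : ℕ} (a : Fin (k + 1) → M) (x : M) :
    (fun s => (Fin.snoc a x : Fin (k + 2) → M) ((Fin.cons (Fin.last (k + 1)) Fin.castSucc : Fin (k + 2) → Fin (k + 2)) s))
      = Fin.cons x a := by
  funext s
  refine Fin.cases ?_ (fun j => ?_) s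
  · simp
  · simp

/-- The relation symbol (at a chosen arity) for the subformula at address `p`. -/
def rsym (p : List ℕ) (n : ℕ) : (L.sum wedgeLang.{u}).Relations n := Sum.inr ⟨Sum.inl p⟩

/-- The extra unary predicate. -/
def psym : (wedgeLang.{u}).Relations 1 := ⟨Sum.inr ()⟩

/-- Translation of an `L`-term into the expanded language, in a context. -/
def trTerm (c : List ℕ) (t : L.Term ℕ) :
    (L.sum wedgeLang.{u}).Term (Empty ⊕ Fin (c.length + 1)) :=
  LHom.sumInl.onTerm (t.relabel fun i => Sum.inr (vmap c i))

/-- Translation of a quantifier-free formula into a first-order formula in a context. -/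
def trQF (c : List ℕ) : Linf L → (L.sum wedgeLang.{u}).BoundedFormula Empty (c.length + 1)
  | .equal t u => Term.bdEqual (trTerm c t) (trTerm c u)
  | .rel R ts => Relations.boundedFormula (Sum.inl R) fun i => trTerm c (ts i)
  | .not ψ => (trQF c ψ).not
  | .and ψ χ => (trQF c ψ) ⊓ (trQF c χ)
  | .or ψ χ => (trQF c ψ) ⊔ (trQF c χ)
  | _ => ⊥

/-- The atomic formula asserting the predicate of address `p` of the variables. -/
def atomSelf (φ : Linf L) (p : List ℕ) :
    (L.sum wedgeLang.{u}).BoundedFormula Empty ((nctx φ p).length + 1) :=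
  Relations.boundedFormula (rsym p _) fun s => Term.var (Sum.inr s)

/-- The atomic formula asserting the predicate of the child address `0 :: p`, applied to the
newest bound variable followed by the variables of the ambient context. -/
def childAtom (φ : Linf L) (p : List ℕ) :
    (L.sum wedgeLang.{u}).BoundedFormula Empty ((nctx φ p).length + 2) :=
  Relations.boundedFormula (rsym (0 :: p) ((nctx φ p).length + 2))
    fun s => Term.var (Sum.inr ((Fin.cons (Fin.last ((nctx φ p).length + 1)) Fin.castSucc :
      Fin ((nctx φ p).length + 2) → Fin ((nctx φ p).length + 2)) s))

def sentQF (φ : Linf L) (p : List ℕ) : (L.sum wedgeLang.{u}).Sentence :=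
  ((atomSelf φ p).imp (trQF (nctx φ p) (node φ p))).alls

def sentEx (φ : Linf L) (p : List ℕ) : (L.sum wedgeLang.{u}).Sentence :=
  ((atomSelf φ p).imp (childAtom φ p).ex).alls

def sentAll (φ : Linf L) (p : List ℕ) : (L.sum wedgeLang.{u}).Sentence :=
  ((atomSelf φ p).imp (childAtom φ p).all).alls

def sentConj (φ : Linf L) (p : List ℕ) (m : ℕ) : (L.sum wedgeLang.{u}).Sentence :=
  ((atomSelf φ p).imp
    (Relations.boundedFormula (rsym (m :: p) ((nctx φ p).length + 1))
      fun s => Term.var (Sum.inr s))).alls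

def sentTop (φ : Linf L) : (L.sum wedgeLang.{u}).Sentence := (atomSelf φ []).alls

def sentP : (L.sum wedgeLang.{u}).Sentence :=
  (Relations.boundedFormula (Sum.inr psym) fun _ => Term.var (Sum.inr (0 : Fin 1))).alls

/-- The axioms attached to the node at address `p`. -/
def ax (φ : Linf L) (p : List ℕ) : Set ((L.sum wedgeLang.{u}).Sentence) :=
  match node φ p with
  | .ex _ _ => {sentEx φ p}
  | .all _ _ => {sentAll φ p}
  | .iConj _ => Set.range (sentConj φ p)
  | _ => {sentQF φ p}

/-- The theory axiomatizing (one direction of) truth of all subformulas of `φ`. -/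
def wedgeTheory (φ : Linf L) : (L.sum wedgeLang.{u}).Theory :=
  insert (sentTop φ) (⋃ p, ax φ p)

/-- The canonical expansion of a model of `φ` to the auxiliary language. -/
def wedgeStructure (φ : Linf L) (M : Type u) [iM : L.Structure M] :
    (wedgeLang.{u}).Structure M where
  funMap := fun f _ => f.elim
  RelMap := fun {n} r a =>
    match r.down with
    | Sum.inl p =>
      if h : n = (nctx φ p).length + 1 then
        Linf.Realize (node φ p) (fun j => a (Fin.cast h.symm (vmap (nctx φ p) j)))
      else True
    | Sum.inr _ => True

theorem wedgeStructure_relMap (φ : Linf L) {M : Type u} [iM : L.Structure M] (q : List ℕ)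
    (c : List ℕ) (hc : nctx φ q = c) (χ : Linf L) (hq : node φ q = χ)
    (a : Fin (c.length + 1) → M) :
    (wedgeStructure φ M).RelMap (n := c.length + 1) ⟨Sum.inl q⟩ a ↔
      χ.Realize (fun j => a (vmap c j)) := by
  subst hc; subst hq
  show (if h : (nctx φ q).length + 1 = (nctx φ q).length + 1 then
      Linf.Realize (node φ q) (fun j => a (Fin.cast h.symm (vmap (nctx φ q) j)))
    else True) ↔ _
  rw [dif_pos rfl]
  simp [Fin.cast]

theorem realize_trQF {N : Type u} [iS : (L.sum wedgeLang.{u}).Structure N]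
    {ψ : Linf L} (h : ψ.QF) (c : List ℕ) (v : Empty → N) (a : Fin (c.length + 1) → N) :
    (trQF c ψ).Realize v a ↔
      @Linf.Realize L N ((LHom.sumInl : L →ᴸ L.sum wedgeLang.{u}).reduct N) ψ
        (fun j => a (vmap c j)) := by
  letI : L.Structure N := (LHom.sumInl : L →ᴸ L.sum wedgeLang.{u}).reduct N
  haveI : (LHom.sumInl : L →ᴸ L.sum wedgeLang.{u}).IsExpansionOn N := ⟨fun _ _ => rfl, fun _ _ => rfl⟩
  have ht : ∀ t : L.Term ℕ, (trTerm c t).realize (Sum.elim v a) =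
      t.realize (fun j => a (vmap c j)) := by
    intro t
    rw [trTerm, LHom.realize_onTerm, Term.realize_relabel]
    rfl
  induction h with
  | fls => simp [trQF, Linf.Realize]
  | equal t u =>
    simp only [trQF, BoundedFormula.realize_bdEqual, ht, Linf.Realize]
  | rel R ts =>
    show Structure.RelMap (L := L.sum wedgeLang.{u}) (Sum.inl R)
        (fun i => (trTerm c (ts i)).realize (Sum.elim v a)) ↔ _
    exact iff_of_eq (congrArg (Structure.RelMap (L := L.sum wedgeLang.{u}) (Sum.inl R))
      (funext fun i => ht (ts i)))
  | not h ih => simp only [trQF, BoundedFormula.realize_not, ih, Linf.Realize]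
  | and h₁ h₂ ih₁ ih₂ =>
    simp only [trQF, BoundedFormula.realize_inf, ih₁, ih₂, Linf.Realize]
  | or h₁ h₂ ih₁ ih₂ =>
    simp only [trQF, BoundedFormula.realize_sup, ih₁, ih₂, Linf.Realize]

theorem child_qf {ψ : Linf L} (h : ψ.QF) (m : ℕ) : child m ψ = ψ := by
  cases h <;> rfl

theorem wedge_child {ψ : Linf L} (h : ψ.IsWedge) (m : ℕ) :
    (child m ψ).QF ∨ (child m ψ).IsWedge := by
  cases h with
  | qf h => rw [child_qf h]; exact Or.inl h
  | ex i h => exact Or.inr h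
  | all i h => exact Or.inr h
  | iConj h hfin => exact Or.inr (h m)

theorem node_qf_or_wedge {φ : Linf L} (hW : φ.IsWedge) :
    ∀ p, (node φ p).QF ∨ (node φ p).IsWedge := by
  intro p
  induction p with
  | nil => exact Or.inr hW
  | cons m p ih =>
    show (child m (node φ p)).QF ∨ (child m (node φ p)).IsWedge
    rcases ih with h | h
    · rw [child_qf h]; exact Or.inl h
    · exact wedge_child h m

theorem node_qf_cases {φ : Linf L} (hW : φ.IsWedge) (p : List ℕ) :
    (node φ p).QF ∨ (∃ i χ, node φ p = .ex i χ ∧ χ.IsWedge) ∨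
      (∃ i χ, node φ p = .all i χ ∧ χ.IsWedge) ∨
      (∃ f, node φ p = .iConj f ∧ ∀ n, Linf.IsWedge (f n)) := by
  have key : ∀ ψ : Linf L, ψ.IsWedge → ψ.QF ∨ (∃ i χ, ψ = .ex i χ ∧ χ.IsWedge) ∨
      (∃ i χ, ψ = .all i χ ∧ χ.IsWedge) ∨ (∃ f, ψ = .iConj f ∧ ∀ n, Linf.IsWedge (f n)) := by
    intro ψ h
    cases h with
    | qf h => exact Or.inl h
    | ex i h => exact Or.inr (Or.inl ⟨_, _, rfl, h⟩)
    | all i h => exact Or.inr (Or.inr (Or.inl ⟨_, _, rfl, h⟩))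
    | iConj h hfin => exact Or.inr (Or.inr (Or.inr ⟨_, rfl, h⟩))
  rcases node_qf_or_wedge hW p with h | h
  · exact Or.inl h
  · exact key _ h

theorem ax_eq_of_qf {φ : Linf L} {p : List ℕ} (h : (node φ p).QF) :
    ax φ p = {sentQF φ p} := by
  unfold ax
  cases h' : node φ p <;> rw [h'] at h <;> first | exact nomatch h | rfl

theorem ax_eq_of_ex {φ : Linf L} {p : List ℕ} {i : ℕ} {χ : Linf L}
    (h : node φ p = .ex i χ) : ax φ p = {sentEx φ p} := by
  unfold ax; rw [h]

theorem ax_eq_of_all {φ : Linf L} {p : List ℕ} {i : ℕ} {χ : Linf L}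
    (h : node φ p = .all i χ) : ax φ p = {sentAll φ p} := by
  unfold ax; rw [h]

theorem ax_eq_of_iConj {φ : Linf L} {p : List ℕ} {f : ℕ → Linf L}
    (h : node φ p = .iConj f) : ax φ p = Set.range (sentConj φ p) := by
  unfold ax; rw [h]

theorem mem_wedgeTheory_of_ax {φ : Linf L} {p : List ℕ} {s : (L.sum wedgeLang.{u}).Sentence}
    (hs : s ∈ ax φ p) : s ∈ wedgeTheory φ :=
  Set.mem_insert_of_mem _ (Set.mem_iUnion.2 ⟨p, hs⟩)

theorem nctx_cons_ex {φ : Linf L} {p : List ℕ} {i : ℕ} {χ : Linf L}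
    (h : node φ p = .ex i χ) (m : ℕ) : nctx φ (m :: p) = i :: nctx φ p := by
  simp only [nctx, h]

theorem nctx_cons_all {φ : Linf L} {p : List ℕ} {i : ℕ} {χ : Linf L}
    (h : node φ p = .all i χ) (m : ℕ) : nctx φ (m :: p) = i :: nctx φ p := by
  simp only [nctx, h]

theorem nctx_cons_iConj {φ : Linf L} {p : List ℕ} {f : ℕ → Linf L}
    (h : node φ p = .iConj f) (m : ℕ) : nctx φ (m :: p) = nctx φ p := by
  simp only [nctx, h]

theorem realize_atomSelf {N : Type u} [iS : (L.sum wedgeLang.{u}).Structure N]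
    (φ : Linf L) (p : List ℕ) (v : Empty → N) (a : Fin ((nctx φ p).length + 1) → N) :
    (atomSelf φ p).Realize v a ↔
      Structure.RelMap (rsym (L := L) p ((nctx φ p).length + 1)) a := by
  simp [atomSelf, BoundedFormula.realize_rel]

theorem sound_qf {N : Type u} [iS : (L.sum wedgeLang.{u}).Structure N] (φ : Linf L)
    (hT : ∀ s ∈ wedgeTheory (L := L) φ, N ⊨ s)
    (p : List ℕ) (hq : (node φ p).QF) (a : Fin ((nctx φ p).length + 1) → N)
    (ha : Structure.RelMap (rsym (L := L) p ((nctx φ p).length + 1)) a) :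
    @Linf.Realize L N ((LHom.sumInl : L →ᴸ L.sum wedgeLang.{u}).reduct N) (node φ p)
      (fun j => a (vmap (nctx φ p) j)) := by
  have hs := hT (sentQF φ p) (mem_wedgeTheory_of_ax (by rw [ax_eq_of_qf hq]; rfl))
  simp only [sentQF, Sentence.Realize, BoundedFormula.realize_alls,
    BoundedFormula.realize_imp] at hs
  have := hs a ((realize_atomSelf φ p _ a).2 ha)
  exact (realize_trQF hq (nctx φ p) _ a).1 this

theorem sound {N : Type u} [iS : (L.sum wedgeLang.{u}).Structure N] (φ : Linf L)
    (hT : ∀ s ∈ wedgeTheory (L := L) φ, N ⊨ s) :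
    ∀ {ψ : Linf L}, ψ.IsWedge →
      ∀ p, node φ p = ψ → ∀ a : Fin ((nctx φ p).length + 1) → N,
        Structure.RelMap (rsym (L := L) p ((nctx φ p).length + 1)) a →
          @Linf.Realize L N ((LHom.sumInl : L →ᴸ L.sum wedgeLang.{u}).reduct N) ψ
            (fun j => a (vmap (nctx φ p) j)) := by
  intro ψ hw
  induction hw with
  | qf h =>
    intro p hp a ha
    subst hp
    exact sound_qf φ hT p h a ha
  | ex i hχ ih =>
    intro p hp a ha
    rename_i χ
    have hchild : node φ (0 :: p) = χ := by show child 0 (node φ p) = χ; rw [hp]; rfl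
    have hctx : nctx φ (0 :: p) = i :: nctx φ p := nctx_cons_ex hp 0
    have hs := hT (sentEx φ p) (mem_wedgeTheory_of_ax (by rw [ax_eq_of_ex hp]; rfl))
    simp only [sentEx, Sentence.Realize, BoundedFormula.realize_alls,
      BoundedFormula.realize_imp, BoundedFormula.realize_ex] at hs
    obtain ⟨x, hx⟩ := hs a ((realize_atomSelf φ p _ a).2 ha)
    have hx' : Structure.RelMap (rsym (L := L) (0 :: p) ((nctx φ p).length + 2))
        (Fin.cons x a : Fin ((nctx φ p).length + 2) → N) := by
      rw [← snoc_comp_cons a x]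
      simpa [childAtom, BoundedFormula.realize_rel] using hx
    have IH' := ih (0 :: p) hchild
    rw [hctx] at IH'
    have hR := IH' (Fin.cons x a) hx'
    show ∃ y, @Linf.Realize L N ((LHom.sumInl : L →ᴸ L.sum wedgeLang.{u}).reduct N) χ (Function.update (fun j => a (vmap (nctx φ p) j)) i y)
    refine ⟨x, ?_⟩
    rw [← cons_vmap (nctx φ p) i a x]
    exact hR
  | all i hχ ih =>
    intro p hp a ha
    rename_i χ
    have hchild : node φ (0 :: p) = χ := by show child 0 (node φ p) = χ; rw [hp]; rfl
    have hctx : nctx φ (0 :: p) = i :: nctx φ p := nctx_cons_all hp 0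
    have hs := hT (sentAll φ p) (mem_wedgeTheory_of_ax (by rw [ax_eq_of_all hp]; rfl))
    simp only [sentAll, Sentence.Realize, BoundedFormula.realize_alls,
      BoundedFormula.realize_imp, BoundedFormula.realize_all] at hs
    have hx := hs a ((realize_atomSelf φ p _ a).2 ha)
    show ∀ y, @Linf.Realize L N ((LHom.sumInl : L →ᴸ L.sum wedgeLang.{u}).reduct N) χ (Function.update (fun j => a (vmap (nctx φ p) j)) i y)
    intro x
    have hx' : Structure.RelMap (rsym (L := L) (0 :: p) ((nctx φ p).length + 2))
        (Fin.cons x a : Fin ((nctx φ p).length + 2) → N) := by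
      rw [← snoc_comp_cons a x]
      simpa [childAtom, BoundedFormula.realize_rel] using hx x
    have IH' := ih (0 :: p) hchild
    rw [hctx] at IH'
    have hR := IH' (Fin.cons x a) hx'
    rw [← cons_vmap (nctx φ p) i a x]
    exact hR
  | iConj hf hfin ih =>
    intro p hp a ha
    rename_i f
    show ∀ n, @Linf.Realize L N ((LHom.sumInl : L →ᴸ L.sum wedgeLang.{u}).reduct N) (f n) (fun j => a (vmap (nctx φ p) j))
    intro n
    have hchild : node φ (n :: p) = f n := by show child n (node φ p) = f n; rw [hp]; rfl
    have hctx : nctx φ (n :: p) = nctx φ p := nctx_cons_iConj hp n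
    have hs := hT (sentConj φ p n) (mem_wedgeTheory_of_ax (by
      rw [ax_eq_of_iConj hp]; exact ⟨n, rfl⟩))
    simp only [sentConj, Sentence.Realize, BoundedFormula.realize_alls,
      BoundedFormula.realize_imp] at hs
    have h2 := hs a ((realize_atomSelf φ p _ a).2 ha)
    have h2' : Structure.RelMap (rsym (L := L) (n :: p) ((nctx φ p).length + 1)) a := by
      simpa [BoundedFormula.realize_rel] using h2
    have IH' := ih n (n :: p) hchild
    rw [hctx] at IH'
    exact IH' a h2'

theorem models_wedgeTheory (φ : Linf L) (hW : φ.IsWedge) (M : Type u) [iM : L.Structure M]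
    (hSat : ∀ v : ℕ → M, φ.Realize v) :
    ∀ s ∈ wedgeTheory (L := L) φ,
      @Sentence.Realize (L.sum wedgeLang.{u}) M
        (@Language.sumStructure L wedgeLang.{u} M iM (wedgeStructure φ M)) s := by
  letI iW : (wedgeLang.{u}).Structure M := wedgeStructure φ M
  intro s hs
  rcases hs with rfl | hs
  · -- sentTop
    simp only [sentTop, Sentence.Realize, BoundedFormula.realize_alls]
    intro xs
    rw [realize_atomSelf]
    exact (wedgeStructure_relMap φ [] [] rfl φ rfl xs).2 (hSat _)
  · rw [Set.mem_iUnion] at hs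
    obtain ⟨p, hs⟩ := hs
    rcases node_qf_cases hW p with hq | ⟨i, χ, hn, hχ⟩ | ⟨i, χ, hn, hχ⟩ | ⟨f, hn, hf⟩
    · rw [ax_eq_of_qf hq] at hs
      rcases hs with rfl
      simp only [sentQF, Sentence.Realize, BoundedFormula.realize_alls,
        BoundedFormula.realize_imp]
      intro a ha
      refine (realize_trQF hq (nctx φ p) _ a).2 ?_
      exact (wedgeStructure_relMap φ p _ rfl _ rfl a).1 ((realize_atomSelf φ p _ a).1 ha)
    · rw [ax_eq_of_ex hn] at hs
      rcases hs with rfl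
      simp only [sentEx, Sentence.Realize, BoundedFormula.realize_alls,
        BoundedFormula.realize_imp, BoundedFormula.realize_ex]
      intro a ha
      have h1 := (wedgeStructure_relMap φ p _ rfl _ rfl a).1 ((realize_atomSelf φ p _ a).1 ha)
      rw [hn] at h1
      obtain ⟨x, hx⟩ := h1
      refine ⟨x, ?_⟩
      have hchild : node φ (0 :: p) = χ := by show child 0 (node φ p) = χ; rw [hn]; rfl
      have hcv := cons_vmap (nctx φ p) i a x
      have hgoal : @Structure.RelMap (L.sum wedgeLang.{u}) M _ ((nctx φ p).length + 2)
          (rsym (L := L) (0 :: p) ((nctx φ p).length + 2))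
          (Fin.cons x a : Fin ((i :: nctx φ p).length + 1) → M) := by
        refine (wedgeStructure_relMap φ (0 :: p) (i :: nctx φ p) (nctx_cons_ex hn 0) χ hchild
          (Fin.cons x a)).2 ?_
        rw [hcv]
        exact hx
      simp only [childAtom, BoundedFormula.realize_rel, Term.realize_var, Sum.elim_inr]
      have hfun : (fun s : Fin ((nctx φ p).length + 2) =>
          (Fin.snoc a x : Fin ((nctx φ p).length + 2) → M)
            (@Fin.cons ((nctx φ p).length + 1) (fun _ => Fin ((nctx φ p).length + 2))
              (Fin.last ((nctx φ p).length + 1)) Fin.castSucc s))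
          = @Fin.cons ((nctx φ p).length + 1) (fun _ => M) x a := by
        funext s
        refine Fin.cases ?_ (fun j => ?_) s <;> simp
      rw [hfun]
      exact hgoal
    · rw [ax_eq_of_all hn] at hs
      rcases hs with rfl
      simp only [sentAll, Sentence.Realize, BoundedFormula.realize_alls,
        BoundedFormula.realize_imp, BoundedFormula.realize_all]
      intro a ha x
      have h1 := (wedgeStructure_relMap φ p _ rfl _ rfl a).1 ((realize_atomSelf φ p _ a).1 ha)
      rw [hn] at h1
      have hx := h1 x
      have hchild : node φ (0 :: p) = χ := by show child 0 (node φ p) = χ; rw [hn]; rfl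
      have hcv := cons_vmap (nctx φ p) i a x
      have hgoal : @Structure.RelMap (L.sum wedgeLang.{u}) M _ ((nctx φ p).length + 2)
          (rsym (L := L) (0 :: p) ((nctx φ p).length + 2))
          (Fin.cons x a : Fin ((i :: nctx φ p).length + 1) → M) := by
        refine (wedgeStructure_relMap φ (0 :: p) (i :: nctx φ p) (nctx_cons_all hn 0) χ hchild
          (Fin.cons x a)).2 ?_
        rw [hcv]
        exact hx
      simp only [childAtom, BoundedFormula.realize_rel, Term.realize_var, Sum.elim_inr]
      have hfun : (fun s : Fin ((nctx φ p).length + 2) =>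
          (Fin.snoc a x : Fin ((nctx φ p).length + 2) → M)
            (@Fin.cons ((nctx φ p).length + 1) (fun _ => Fin ((nctx φ p).length + 2))
              (Fin.last ((nctx φ p).length + 1)) Fin.castSucc s))
          = @Fin.cons ((nctx φ p).length + 1) (fun _ => M) x a := by
        funext s
        refine Fin.cases ?_ (fun j => ?_) s <;> simp
      rw [hfun]
      exact hgoal
    · rw [ax_eq_of_iConj hn] at hs
      obtain ⟨n, rfl⟩ := hs
      simp only [sentConj, Sentence.Realize, BoundedFormula.realize_alls,
        BoundedFormula.realize_imp]
      intro a ha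
      have h1 := (wedgeStructure_relMap φ p _ rfl _ rfl a).1 ((realize_atomSelf φ p _ a).1 ha)
      rw [hn] at h1
      have hchild : node φ (n :: p) = f n := by show child n (node φ p) = f n; rw [hn]; rfl
      simp only [BoundedFormula.realize_rel, Term.realize_var, Sum.elim_inr]
      have hgoal : @Structure.RelMap (L.sum wedgeLang.{u}) M
          (@Language.sumStructure L wedgeLang.{u} M iM iW) ((nctx φ p).length + 1)
          (rsym (L := L) (n :: p) ((nctx φ p).length + 1)) a :=
        (wedgeStructure_relMap φ (n :: p) (nctx φ p) (nctx_cons_iConj hn n) (f n) hchild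
          a).2 (h1 n)
      exact hgoal

theorem sat_iff_model (φ : Linf L) (hW : φ.IsWedge) (hfv : φ.freeVars = ∅)
    (M : Type u) (iM : L.Structure M) (hM : Nonempty M) :
    @Linf.Sat L M iM φ ↔ ∃ iW : (wedgeLang.{u}).Structure M,
      @Theory.Model (L.sum wedgeLang.{u}) M (@Language.sumStructure L wedgeLang.{u} M iM iW)
        (wedgeTheory φ) := by
  letI := iM
  constructor
  · intro hSat
    letI iW : (wedgeLang.{u}).Structure M := wedgeStructure φ M
    exact ⟨wedgeStructure φ M, (Theory.model_iff _).2 (models_wedgeTheory φ hW M hSat)⟩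
  · rintro ⟨iW, hmod⟩
    letI := iW
    have hT := (Theory.model_iff (M := M) (wedgeTheory (L := L) φ)).1 hmod
    obtain ⟨m⟩ := hM
    intro v
    have h0 : Structure.RelMap (rsym (L := L) ([] : List ℕ) 1) (fun _ : Fin 1 => m) := by
      have h1 := hT (sentTop φ) (Set.mem_insert _ _)
      simp only [sentTop, Sentence.Realize, BoundedFormula.realize_alls] at h1
      exact (realize_atomSelf φ [] _ _).1 (h1 _)
    have hR := sound φ hT hW [] rfl (fun _ => m) h0
    have hR' : @Linf.Realize L M iM φ (fun _ => m) := hR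
    exact (linf_realize_congr φ _ v (by rw [hfv]; simp)).1 hR'

end Aux
/-- Let `τ` be a countable language and `𝕂` a class of `τ`-structures
closed under isomorphism. If `𝕂` is the class of all models of a `⩕`-sentence, then `𝕂`
is a `PC'_Δ`-class, and hence a `PC_Δ`-class. -/
theorem isPCDelta'_and_isPCDelta_of_wedgeElementary
    {L : FirstOrder.Language.{u, u}} [Countable L.Symbols]
    (K : StructClass L) (hK : ClosedUnderIso K)
    (h : IsWedgeElementary K) :
    IsPCDelta' K ∧ IsPCDelta K := by
  obtain ⟨φ, hW, hfv, hiff⟩ := h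
  have hpc : IsPCDelta K := by
    refine ⟨wedgeLang.{u}, inferInstance, wedgeTheory φ, fun M iM hM => ?_⟩
    rw [hiff M iM hM]
    exact sat_iff_model φ hW hfv M iM hM
  refine ⟨⟨wedgeLang.{u}, inferInstance, psym, insert sentP (wedgeTheory φ),
    fun M iM hM => ?_⟩, hpc⟩
  constructor
  · intro hk
    letI := iM
    letI iW : (wedgeLang.{u}).Structure M := wedgeStructure φ M
    have hSat : @Linf.Sat L M iM φ := (hiff M iM hM).1 hk
    refine ⟨M, @Language.sumStructure L wedgeLang.{u} M iM iW, ?_, ⊤, ?_, ?_⟩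
    · refine (Theory.model_iff _).2 fun s hs => ?_
      rcases hs with rfl | hs
      · simp only [sentP, Sentence.Realize, BoundedFormula.realize_alls,
          BoundedFormula.realize_rel, Term.realize_var, Sum.elim_inr]
        intro xs
        exact trivial
      · exact models_wedgeTheory φ hW M hSat s hs
    · refine Set.ext fun a => ?_
      simp only [SetLike.mem_coe]
      exact ⟨fun _ => trivial, fun _ => Substructure.mem_top a⟩
    · exact ⟨(Substructure.topEquiv).symm⟩
  · rintro ⟨A, iA, hmod, S, hS, ⟨e⟩⟩
    letI := iA
    letI iAL : L.Structure A := (LHom.sumInl : L →ᴸ L.sum wedgeLang.{u}).reduct A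
    obtain ⟨m⟩ := hM
    haveI hA : Nonempty A := ⟨(e m).1⟩
    have hmodT : @Theory.Model _ A iA (wedgeTheory φ) := hmod.mono (Set.subset_insert _ _)
    have hT := (Theory.model_iff (M := A) (wedgeTheory (L := L) φ)).1 hmodT
    have hSatA : @Linf.Sat L A ((LHom.sumInl : L →ᴸ L.sum wedgeLang.{u}).reduct A) φ := by
      intro v
      have h0 : Structure.RelMap (rsym (L := L) ([] : List ℕ) 1)
          (fun _ : Fin 1 => (e m).1) := by
        have h1 := hT (sentTop φ) (Set.mem_insert _ _)
        simp only [sentTop, Sentence.Realize, BoundedFormula.realize_alls] at h1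
        exact (realize_atomSelf φ [] _ _).1 (h1 _)
      have hR := sound φ hT hW [] rfl (fun _ => (e m).1) h0
      exact (linf_realize_congr φ _ v (by rw [hfv]; simp)).1 hR
    have hKA : K A ((LHom.sumInl : L →ᴸ L.sum wedgeLang.{u}).reduct A) :=
      (hiff A ((LHom.sumInl : L →ᴸ L.sum wedgeLang.{u}).reduct A) hA).2 hSatA
    have hPall : ∀ a : A, a ∈ S := by
      intro a
      rw [← SetLike.mem_coe, hS]
      have h1 := (Theory.model_iff (M := A) _).1 hmod sentP (Set.mem_insert _ _)
      simp only [sentP, Sentence.Realize, BoundedFormula.realize_alls,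
        BoundedFormula.realize_rel, Term.realize_var, Sum.elim_inr] at h1
      have h2 := h1 ![a]
      show @Structure.RelMap (L.sum wedgeLang.{u}) A iA 1 (Sum.inr psym) ![a]
      have h3 : (![a] : Fin 1 → A) = fun _ : Fin 1 => (![a] : Fin 1 → A) 0 := by
        funext i; fin_cases i; rfl
      rw [h3]
      exact h2
    have hStop : S = ⊤ :=
      SetLike.ext fun a => ⟨fun _ => trivial, fun _ => hPall a⟩
    subst hStop
    exact (hK M A iM ((LHom.sumInl : L →ᴸ L.sum wedgeLang.{u}).reduct A) ⟨m⟩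
      ⟨(@Substructure.topEquiv L A ((LHom.sumInl : L →ᴸ L.sum wedgeLang.{u}).reduct A)).comp e⟩).2 hKA

end PaperCDH
end

section
/- If φ1 and φ2 are ⩕-formulas (over a countable language τ), then the disjunction φ1 ∨ φ2 is logically equivalent to a ⩕-formula with the same free variables. -/
universe u

open FirstOrder Language

namespace PaperCDH

variable {L : FirstOrder.Language.{u, u}}

namespace Linf

open Set

lemma term_varFinset_relabel (σ : ℕ → ℕ) (t : L.Term ℕ) :
    (t.relabel σ).varFinset = t.varFinset.image σ := by
  induction t with
  | var i => simp
  | func f ts ih => simp [Finset.biUnion_image, ih, Finset.image_biUnion]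

lemma term_realize_congr {M : Type u} [L.Structure M] (t : L.Term ℕ) {v w : ℕ → M}
    (h : ∀ k ∈ t.varFinset, v k = w k) : t.realize v = t.realize w := by
  induction t with
  | var i => exact h i (by simp)
  | func f ts ih =>
    simp only [Term.realize]
    congr 1
    funext i
    refine ih i fun k hk => h k ?_
    simp only [Term.varFinset, Finset.mem_biUnion]
    exact ⟨i, Finset.mem_univ i, hk⟩

/-- Rename all (free and bound) variables along `σ`. -/
def ren (σ : ℕ → ℕ) : Linf L → Linf L
  | .fls => .fls
  | .equal t u => .equal (t.relabel σ) (u.relabel σ)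
  | .rel R ts => .rel R fun i => (ts i).relabel σ
  | .not φ => .not (φ.ren σ)
  | .and φ ψ => .and (φ.ren σ) (ψ.ren σ)
  | .or φ ψ => .or (φ.ren σ) (ψ.ren σ)
  | .ex i φ => .ex (σ i) (φ.ren σ)
  | .all i φ => .all (σ i) (φ.ren σ)
  | .iConj f => .iConj fun n => (f n).ren σ
  | .iDisj f => .iDisj fun n => (f n).ren σ

lemma ren_id (φ : Linf L) : φ.ren id = φ := by
  induction φ <;> simp_all [ren]

lemma freeVars_ren (σ : ℕ ≃ ℕ) (φ : Linf L) :
    (φ.ren σ).freeVars = σ '' φ.freeVars := by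
  induction φ with
  | fls => simp [ren, freeVars]
  | equal t u => simp [ren, freeVars, term_varFinset_relabel, Set.image_union]
  | rel R ts => simp [ren, freeVars, term_varFinset_relabel, Set.image_iUnion]
  | not φ ih => simpa [ren, freeVars] using ih
  | and φ ψ ih1 ih2 => simp [ren, freeVars, ih1, ih2, Set.image_union]
  | or φ ψ ih1 ih2 => simp [ren, freeVars, ih1, ih2, Set.image_union]
  | ex i φ ih => simp [ren, freeVars, ih, Set.image_diff σ.injective]
  | all i φ ih => simp [ren, freeVars, ih, Set.image_diff σ.injective]
  | iConj f ih => simp [ren, freeVars, ih, Set.image_iUnion]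
  | iDisj f ih => simp [ren, freeVars, ih, Set.image_iUnion]

lemma update_comp {M : Type u} (σ : ℕ ≃ ℕ) (v : ℕ → M) (i : ℕ) (a : M) :
    (Function.update v (σ i) a) ∘ σ = Function.update (v ∘ σ) i a := by
  funext k
  by_cases h : k = i
  · subst h; simp
  · simp [Function.comp, Function.update_of_ne h, Function.update_of_ne (σ.injective.ne h)]

lemma realize_ren {M : Type u} [L.Structure M] (σ : ℕ ≃ ℕ) (φ : Linf L) :
    ∀ v : ℕ → M, (φ.ren σ).Realize v ↔ φ.Realize (v ∘ σ) := by
  induction φ with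
  | fls => intro v; rfl
  | equal t u => intro v; simp [ren, Realize, Term.realize_relabel]
  | rel R ts => intro v; simp [ren, Realize, Term.realize_relabel]
  | not φ ih => intro v; simp [ren, Realize, ih]
  | and φ ψ ih1 ih2 => intro v; simp [ren, Realize, ih1, ih2]
  | or φ ψ ih1 ih2 => intro v; simp [ren, Realize, ih1, ih2]
  | ex i φ ih => intro v; simp only [ren, Realize, ih, update_comp]
  | all i φ ih => intro v; simp only [ren, Realize, ih, update_comp]
  | iConj f ih => intro v; simp only [ren, Realize, ih]
  | iDisj f ih => intro v; simp only [ren, Realize, ih]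

lemma realize_congr {M : Type u} [L.Structure M] (φ : Linf L) :
    ∀ {v w : ℕ → M}, (∀ k ∈ φ.freeVars, v k = w k) → (φ.Realize v ↔ φ.Realize w) := by
  induction φ with
  | fls => intro v w h; rfl
  | equal t u =>
    intro v w h
    simp only [freeVars, Finset.coe_union, Set.mem_union, Finset.mem_coe] at h
    simp only [Realize]
    rw [term_realize_congr t fun k hk => h k (Or.inl hk),
      term_realize_congr u fun k hk => h k (Or.inr hk)]
  | rel R ts =>
    intro v w h
    simp only [freeVars, Set.mem_iUnion, Finset.mem_coe] at h
    simp only [Realize]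
    have : (fun i => (ts i).realize v) = fun i => (ts i).realize w := by
      funext i
      exact term_realize_congr (ts i) fun k hk => h k ⟨i, hk⟩
    rw [this]
  | not φ ih => intro v w h; simp only [Realize]; rw [ih h]
  | and φ ψ ih1 ih2 =>
    intro v w h
    simp only [freeVars, Set.mem_union] at h
    simp only [Realize]
    rw [ih1 fun k hk => h k (Or.inl hk), ih2 fun k hk => h k (Or.inr hk)]
  | or φ ψ ih1 ih2 =>
    intro v w h
    simp only [freeVars, Set.mem_union] at h
    simp only [Realize]
    rw [ih1 fun k hk => h k (Or.inl hk), ih2 fun k hk => h k (Or.inr hk)]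
  | ex i φ ih =>
    intro v w h
    simp only [freeVars, Set.mem_diff, Set.mem_singleton_iff] at h
    simp only [Realize]
    refine exists_congr fun a => ih fun k hk => ?_
    by_cases hki : k = i
    · subst hki; simp
    · rw [Function.update_of_ne hki, Function.update_of_ne hki]
      exact h k ⟨hk, hki⟩
  | all i φ ih =>
    intro v w h
    simp only [freeVars, Set.mem_diff, Set.mem_singleton_iff] at h
    simp only [Realize]
    refine forall_congr' fun a => ih fun k hk => ?_
    by_cases hki : k = i
    · subst hki; simp
    · rw [Function.update_of_ne hki, Function.update_of_ne hki]
      exact h k ⟨hk, hki⟩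
  | iConj f ih =>
    intro v w h
    simp only [freeVars, Set.mem_iUnion] at h
    exact forall_congr' fun n => ih n fun k hk => h k ⟨n, hk⟩
  | iDisj f ih =>
    intro v w h
    simp only [freeVars, Set.mem_iUnion] at h
    exact exists_congr fun n => ih n fun k hk => h k ⟨n, hk⟩

lemma QF.ren {φ : Linf L} (h : QF φ) (σ : ℕ → ℕ) : QF (φ.ren σ) := by
  induction h with
  | fls => exact .fls
  | equal t u => exact .equal _ _
  | rel R ts => exact .rel _ _
  | not _ ih => exact .not ih
  | and _ _ ih1 ih2 => exact .and ih1 ih2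
  | or _ _ ih1 ih2 => exact .or ih1 ih2

lemma QF.finite_freeVars {φ : Linf L} (h : QF φ) : φ.freeVars.Finite := by
  induction h with
  | fls => simp [freeVars]
  | equal t u => exact (t.varFinset ∪ u.varFinset).finite_toSet
  | rel R ts => exact Set.finite_iUnion fun i => Finset.finite_toSet _
  | not _ ih => exact ih
  | and _ _ ih1 ih2 => exact ih1.union ih2
  | or _ _ ih1 ih2 => exact ih1.union ih2

lemma IsWedge.finite_freeVars {φ : Linf L} (h : IsWedge φ) : φ.freeVars.Finite := by
  induction h with
  | qf hq => exact hq.finite_freeVars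
  | ex i _ ih => exact ih.diff
  | all i _ ih => exact ih.diff
  | iConj _ hfin _ => exact hfin

lemma swap_image_diff {A B : Set ℕ} {i j : ℕ} (hjA : j ∉ A) (hjB : j ∉ B) :
    ((Equiv.swap i j '' A) ∪ B) \ {j} = (A \ {i}) ∪ B := by
  ext x
  simp only [Set.mem_diff, Set.mem_union, Set.mem_image, Set.mem_singleton_iff]
  constructor
  · rintro ⟨⟨y, hy, rfl⟩ | hB, hxj⟩
    · have hyj : y ≠ j := fun h => hjA (h ▸ hy)
      have hyi : y ≠ i := by rintro rfl; exact hxj (Equiv.swap_apply_left y j)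
      rw [Equiv.swap_apply_of_ne_of_ne hyi hyj]
      exact Or.inl ⟨hy, hyi⟩
    · exact Or.inr hB
  · rintro (⟨hA, hxi⟩ | hB)
    · have hxj : x ≠ j := fun h => hjA (h ▸ hA)
      exact ⟨Or.inl ⟨x, hA, Equiv.swap_apply_of_ne_of_ne hxi hxj⟩, hxj⟩
    · exact ⟨Or.inr hB, fun h => hjB (h ▸ hB)⟩

lemma or_qf {φ : Linf L} (h : IsWedge φ) : ∀ (σ : ℕ ≃ ℕ) (ψ : Linf L), QF ψ →
    ∃ θ : Linf L, θ.IsWedge ∧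
      θ.freeVars = (φ.ren σ).freeVars ∪ ψ.freeVars ∧
      ∀ (M : Type u) (iM : L.Structure M), Nonempty M → ∀ v : ℕ → M,
        θ.Realize v ↔ (φ.ren σ).Realize v ∨ ψ.Realize v := by
  induction h with
  | @qf φ0 hq =>
    intro σ ψ hψ
    exact ⟨.or (φ0.ren σ) ψ, .qf ((hq.ren σ).or hψ), rfl, fun M iM _ v => Iff.rfl⟩
  | @ex φ0 i h0 ih =>
    intro σ ψ hψ
    have hfin : ((φ0.ren ⇑σ).freeVars ∪ ψ.freeVars).Finite := by
      rw [freeVars_ren]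
      exact (h0.finite_freeVars.image σ).union hψ.finite_freeVars
    obtain ⟨j, hj⟩ := hfin.infinite_compl.nonempty
    simp only [Set.mem_compl_iff, Set.mem_union, not_or] at hj
    obtain ⟨hj1, hj2⟩ := hj
    obtain ⟨θ0, hw, hfv, hr⟩ := ih (σ.trans (Equiv.swap (σ i) j)) ψ hψ
    have h1 : ∀ (M : Type u) (iM : L.Structure M) (v : ℕ → M) (a : M),
        (φ0.ren ⇑(σ.trans (Equiv.swap (σ i) j))).Realize (Function.update v j a) ↔
          (φ0.ren ⇑σ).Realize (Function.update v (σ i) a) := by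
      intro M iM v a
      rw [realize_ren, realize_ren]
      refine realize_congr φ0 fun k hk => ?_
      by_cases hki : k = i
      · subst hki
        show Function.update v j a (Equiv.swap (σ k) j (σ k)) =
          Function.update v (σ k) a (σ k)
        rw [Equiv.swap_apply_left, Function.update_self, Function.update_self]
      · have h2 : σ k ≠ σ i := σ.injective.ne hki
        have h3 : σ k ≠ j := by
          intro hkj
          apply hj1
          rw [freeVars_ren]
          exact ⟨k, hk, hkj⟩
        show Function.update v j a (Equiv.swap (σ i) j (σ k)) =
          Function.update v (σ i) a (σ k)
        rw [Equiv.swap_apply_of_ne_of_ne h2 h3, Function.update_of_ne h3,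
          Function.update_of_ne h2]
    refine ⟨.ex j θ0, .ex j hw, ?_, ?_⟩
    · show θ0.freeVars \ {j} = ((φ0.ren ⇑σ).freeVars \ {σ i}) ∪ ψ.freeVars
      rw [hfv, freeVars_ren, Equiv.coe_trans, Set.image_comp, ← freeVars_ren σ φ0]
      exact swap_image_diff hj1 hj2
    · intro M iM hM v
      haveI := hM
      show (∃ a, θ0.Realize (Function.update v j a)) ↔
        (∃ a, (φ0.ren ⇑σ).Realize (Function.update v (σ i) a)) ∨ ψ.Realize v
      have key : ∀ a : M, θ0.Realize (Function.update v j a) ↔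
          (φ0.ren ⇑σ).Realize (Function.update v (σ i) a) ∨ ψ.Realize v := by
        intro a
        rw [hr M iM hM _, h1 M iM v a,
          realize_congr ψ fun k hk => Function.update_of_ne (fun hkj : k = j => hj2 (hkj ▸ hk)) a v]
      simp only [key]
      rw [exists_or, exists_const]
  | @all φ0 i h0 ih =>
    intro σ ψ hψ
    have hfin : ((φ0.ren ⇑σ).freeVars ∪ ψ.freeVars).Finite := by
      rw [freeVars_ren]
      exact (h0.finite_freeVars.image σ).union hψ.finite_freeVars
    obtain ⟨j, hj⟩ := hfin.infinite_compl.nonempty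
    simp only [Set.mem_compl_iff, Set.mem_union, not_or] at hj
    obtain ⟨hj1, hj2⟩ := hj
    obtain ⟨θ0, hw, hfv, hr⟩ := ih (σ.trans (Equiv.swap (σ i) j)) ψ hψ
    have h1 : ∀ (M : Type u) (iM : L.Structure M) (v : ℕ → M) (a : M),
        (φ0.ren ⇑(σ.trans (Equiv.swap (σ i) j))).Realize (Function.update v j a) ↔
          (φ0.ren ⇑σ).Realize (Function.update v (σ i) a) := by
      intro M iM v a
      rw [realize_ren, realize_ren]
      refine realize_congr φ0 fun k hk => ?_
      by_cases hki : k = i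
      · subst hki
        show Function.update v j a (Equiv.swap (σ k) j (σ k)) =
          Function.update v (σ k) a (σ k)
        rw [Equiv.swap_apply_left, Function.update_self, Function.update_self]
      · have h2 : σ k ≠ σ i := σ.injective.ne hki
        have h3 : σ k ≠ j := by
          intro hkj
          apply hj1
          rw [freeVars_ren]
          exact ⟨k, hk, hkj⟩
        show Function.update v j a (Equiv.swap (σ i) j (σ k)) =
          Function.update v (σ i) a (σ k)
        rw [Equiv.swap_apply_of_ne_of_ne h2 h3, Function.update_of_ne h3,
          Function.update_of_ne h2]
    refine ⟨.all j θ0, .all j hw, ?_, ?_⟩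
    · show θ0.freeVars \ {j} = ((φ0.ren ⇑σ).freeVars \ {σ i}) ∪ ψ.freeVars
      rw [hfv, freeVars_ren, Equiv.coe_trans, Set.image_comp, ← freeVars_ren σ φ0]
      exact swap_image_diff hj1 hj2
    · intro M iM hM v
      show (∀ a, θ0.Realize (Function.update v j a)) ↔
        (∀ a, (φ0.ren ⇑σ).Realize (Function.update v (σ i) a)) ∨ ψ.Realize v
      have key : ∀ a : M, θ0.Realize (Function.update v j a) ↔
          (φ0.ren ⇑σ).Realize (Function.update v (σ i) a) ∨ ψ.Realize v := by
        intro a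
        rw [hr M iM hM _, h1 M iM v a,
          realize_congr ψ fun k hk => Function.update_of_ne (fun hkj : k = j => hj2 (hkj ▸ hk)) a v]
      simp only [key]
      rw [forall_or_right]
  | @iConj f hf hfin ih =>
    intro σ ψ hψ
    choose θ hw hfv hr using fun n => ih n σ ψ hψ
    have hU : (⋃ n, (θ n).freeVars) = ((Linf.iConj f).ren ⇑σ).freeVars ∪ ψ.freeVars := by
      show _ = (⋃ n, ((f n).ren ⇑σ).freeVars) ∪ ψ.freeVars
      simp only [hfv]
      ext x
      simp [Set.mem_iUnion, exists_or]
    refine ⟨.iConj θ, .iConj hw ?_, hU, ?_⟩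
    · rw [hU, freeVars_ren]
      exact (hfin.image σ).union hψ.finite_freeVars
    · intro M iM hM v
      show (∀ n, (θ n).Realize v) ↔ (∀ n, ((f n).ren ⇑σ).Realize v) ∨ ψ.Realize v
      simp only [fun n => hr n M iM hM v]
      constructor
      · intro h
        by_cases hψv : ψ.Realize v
        · exact Or.inr hψv
        · exact Or.inl fun n => (h n).resolve_right hψv
      · rintro (h | h) n
        · exact Or.inl (h n)
        · exact Or.inr h

lemma or_wedge {ψ : Linf L} (h : IsWedge ψ) : ∀ (σ : ℕ ≃ ℕ) (φ : Linf L), IsWedge φ →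
    ∃ θ : Linf L, θ.IsWedge ∧
      θ.freeVars = φ.freeVars ∪ (ψ.ren σ).freeVars ∧
      ∀ (M : Type u) (iM : L.Structure M), Nonempty M → ∀ v : ℕ → M,
        θ.Realize v ↔ φ.Realize v ∨ (ψ.ren σ).Realize v := by
  induction h with
  | @qf ψ0 hq =>
    intro σ φ hφ
    obtain ⟨θ, hw, hfv, hr⟩ := or_qf hφ (Equiv.refl ℕ) (ψ0.ren ⇑σ) (hq.ren ⇑σ)
    rw [Equiv.coe_refl, ren_id] at hfv hr
    exact ⟨θ, hw, hfv, hr⟩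
  | @ex ψ0 i h0 ih =>
    intro σ φ hφ
    have hfin : (φ.freeVars ∪ (ψ0.ren ⇑σ).freeVars).Finite := by
      rw [freeVars_ren]
      exact hφ.finite_freeVars.union (h0.finite_freeVars.image σ)
    obtain ⟨j, hj⟩ := hfin.infinite_compl.nonempty
    simp only [Set.mem_compl_iff, Set.mem_union, not_or] at hj
    obtain ⟨hj1, hj2⟩ := hj
    obtain ⟨θ0, hw, hfv, hr⟩ := ih (σ.trans (Equiv.swap (σ i) j)) φ hφ
    have h1 : ∀ (M : Type u) (iM : L.Structure M) (v : ℕ → M) (a : M),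
        (ψ0.ren ⇑(σ.trans (Equiv.swap (σ i) j))).Realize (Function.update v j a) ↔
          (ψ0.ren ⇑σ).Realize (Function.update v (σ i) a) := by
      intro M iM v a
      rw [realize_ren, realize_ren]
      refine realize_congr ψ0 fun k hk => ?_
      by_cases hki : k = i
      · subst hki
        show Function.update v j a (Equiv.swap (σ k) j (σ k)) =
          Function.update v (σ k) a (σ k)
        rw [Equiv.swap_apply_left, Function.update_self, Function.update_self]
      · have h2 : σ k ≠ σ i := σ.injective.ne hki
        have h3 : σ k ≠ j := by
          intro hkj
          apply hj2
          rw [freeVars_ren]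
          exact ⟨k, hk, hkj⟩
        show Function.update v j a (Equiv.swap (σ i) j (σ k)) =
          Function.update v (σ i) a (σ k)
        rw [Equiv.swap_apply_of_ne_of_ne h2 h3, Function.update_of_ne h3,
          Function.update_of_ne h2]
    refine ⟨.ex j θ0, .ex j hw, ?_, ?_⟩
    · show θ0.freeVars \ {j} = φ.freeVars ∪ ((ψ0.ren ⇑σ).freeVars \ {σ i})
      have hsw := swap_image_diff (A := (ψ0.ren ⇑σ).freeVars) (B := φ.freeVars)
        (i := σ i) (j := j) hj2 hj1
      rw [hfv, freeVars_ren, Equiv.coe_trans, Set.image_comp, ← freeVars_ren σ ψ0,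
        Set.union_comm φ.freeVars, hsw, Set.union_comm]
    · intro M iM hM v
      haveI := hM
      show (∃ a, θ0.Realize (Function.update v j a)) ↔
        φ.Realize v ∨ ∃ a, (ψ0.ren ⇑σ).Realize (Function.update v (σ i) a)
      have key : ∀ a : M, θ0.Realize (Function.update v j a) ↔
          φ.Realize v ∨ (ψ0.ren ⇑σ).Realize (Function.update v (σ i) a) := by
        intro a
        rw [hr M iM hM _, h1 M iM v a,
          realize_congr φ fun k hk => Function.update_of_ne (fun hkj : k = j => hj1 (hkj ▸ hk)) a v]
      simp only [key]
      rw [exists_or, exists_const]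
  | @all ψ0 i h0 ih =>
    intro σ φ hφ
    have hfin : (φ.freeVars ∪ (ψ0.ren ⇑σ).freeVars).Finite := by
      rw [freeVars_ren]
      exact hφ.finite_freeVars.union (h0.finite_freeVars.image σ)
    obtain ⟨j, hj⟩ := hfin.infinite_compl.nonempty
    simp only [Set.mem_compl_iff, Set.mem_union, not_or] at hj
    obtain ⟨hj1, hj2⟩ := hj
    obtain ⟨θ0, hw, hfv, hr⟩ := ih (σ.trans (Equiv.swap (σ i) j)) φ hφ
    have h1 : ∀ (M : Type u) (iM : L.Structure M) (v : ℕ → M) (a : M),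
        (ψ0.ren ⇑(σ.trans (Equiv.swap (σ i) j))).Realize (Function.update v j a) ↔
          (ψ0.ren ⇑σ).Realize (Function.update v (σ i) a) := by
      intro M iM v a
      rw [realize_ren, realize_ren]
      refine realize_congr ψ0 fun k hk => ?_
      by_cases hki : k = i
      · subst hki
        show Function.update v j a (Equiv.swap (σ k) j (σ k)) =
          Function.update v (σ k) a (σ k)
        rw [Equiv.swap_apply_left, Function.update_self, Function.update_self]
      · have h2 : σ k ≠ σ i := σ.injective.ne hki
        have h3 : σ k ≠ j := by
          intro hkj
          apply hj2
          rw [freeVars_ren]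
          exact ⟨k, hk, hkj⟩
        show Function.update v j a (Equiv.swap (σ i) j (σ k)) =
          Function.update v (σ i) a (σ k)
        rw [Equiv.swap_apply_of_ne_of_ne h2 h3, Function.update_of_ne h3,
          Function.update_of_ne h2]
    refine ⟨.all j θ0, .all j hw, ?_, ?_⟩
    · show θ0.freeVars \ {j} = φ.freeVars ∪ ((ψ0.ren ⇑σ).freeVars \ {σ i})
      have hsw := swap_image_diff (A := (ψ0.ren ⇑σ).freeVars) (B := φ.freeVars)
        (i := σ i) (j := j) hj2 hj1
      rw [hfv, freeVars_ren, Equiv.coe_trans, Set.image_comp, ← freeVars_ren σ ψ0,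
        Set.union_comm φ.freeVars, hsw, Set.union_comm]
    · intro M iM hM v
      show (∀ a, θ0.Realize (Function.update v j a)) ↔
        φ.Realize v ∨ ∀ a, (ψ0.ren ⇑σ).Realize (Function.update v (σ i) a)
      have key : ∀ a : M, θ0.Realize (Function.update v j a) ↔
          φ.Realize v ∨ (ψ0.ren ⇑σ).Realize (Function.update v (σ i) a) := by
        intro a
        rw [hr M iM hM _, h1 M iM v a,
          realize_congr φ fun k hk => Function.update_of_ne (fun hkj : k = j => hj1 (hkj ▸ hk)) a v]
      simp only [key]
      rw [forall_or_left]
  | @iConj f hf hfin ih =>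
    intro σ φ hφ
    choose θ hw hfv hr using fun n => ih n σ φ hφ
    have hU : (⋃ n, (θ n).freeVars) = φ.freeVars ∪ ((Linf.iConj f).ren ⇑σ).freeVars := by
      show _ = φ.freeVars ∪ ⋃ n, ((f n).ren ⇑σ).freeVars
      simp only [hfv]
      ext x
      simp [Set.mem_iUnion, exists_or]
    refine ⟨.iConj θ, .iConj hw ?_, hU, ?_⟩
    · rw [hU, freeVars_ren]
      exact hφ.finite_freeVars.union (hfin.image σ)
    · intro M iM hM v
      show (∀ n, (θ n).Realize v) ↔ φ.Realize v ∨ ∀ n, ((f n).ren ⇑σ).Realize v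
      simp only [fun n => hr n M iM hM v]
      constructor
      · intro h
        by_cases hφv : φ.Realize v
        · exact Or.inl hφv
        · exact Or.inr fun n => (h n).resolve_left hφv
      · rintro (h | h) n
        · exact Or.inl h
        · exact Or.inr (h n)

end Linf



/-- If `φ₁` and `φ₂` are `⩕`-formulas (over a countable language `L`),
then the disjunction `φ₁ ∨ φ₂` is logically equivalent to a `⩕`-formula with the same
free variables. -/
theorem wedge_or_equiv_wedge {L : FirstOrder.Language.{u, u}} [Countable L.Symbols]
    (φ₁ φ₂ : Linf L) (h₁ : φ₁.IsWedge) (h₂ : φ₂.IsWedge) :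
    ∃ θ : Linf L, θ.IsWedge ∧ θ.freeVars = (Linf.or φ₁ φ₂).freeVars ∧
      ∀ (M : Type u) (iM : L.Structure M), Nonempty M → ∀ v : ℕ → M,
        @Linf.Realize L M iM θ v ↔ @Linf.Realize L M iM (Linf.or φ₁ φ₂) v := by
  obtain ⟨θ, hw, hfv, hr⟩ := Linf.or_wedge h₂ (Equiv.refl ℕ) φ₁ h₁
  rw [Equiv.coe_refl, Linf.ren_id] at hfv hr
  exact ⟨θ, hw, hfv, hr⟩

end PaperCDH
end

section
/- Let A = (A, R, g, …) be a τ*_tup-structure which is a model of T_tup whose M-sort equals the τ-structure 𝓜, and identify 𝓜^{<ℕ} with its canonical image in A. Let φ(x̄) be a Π₁ τ*_tup-formula and let ā be parameters from 𝓜^{<ℕ}. If A ⊨ φ(ā), then (𝓜^{<ℕ}, R∩ℕ, g restricted to ℕ × M^{<ℕ}) ⊨ φ(ā). -/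
universe u

open FirstOrder Language

namespace PaperCDH

/-! ### The three-sorted language `τ*_tup` of tuples, and its `Π₁` formulas -/

/-- A `τ*_tup`-structure: a three-sorted structure consisting of an `L`-structure sort
`M`, an arithmetic sort `N` (with `0`, `1`, `+`, `·`, `<`), and a tuple sort `Tup`,
together with a length function `len : Tup → N`, an indexing relation
`ind ⊆ Tup × N × M`, a unary relation `R` on `N`, and a function `g : N × Tup → M`. -/
structure TupStr (L : FirstOrder.Language.{0, 0}) : Type 1 where
  M : Type
  strM : L.Structure M
  N : Type
  zero : N
  one : N
  add : N → N → N
  mul : N → N → N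
  lt : N → N → Prop
  Tup : Type
  len : Tup → N
  ind : Tup → N → M → Prop
  R : N → Prop
  g : N → Tup → M

namespace TupStr

variable {L : FirstOrder.Language.{0, 0}}

/-- The arithmetic sort satisfies `PA⁻`: the (finitely axiomatized) theory of the
nonnegative parts of discretely ordered commutative rings. -/
structure IsPAminus (A : TupStr L) : Prop where
  add_assoc : ∀ x y z, A.add (A.add x y) z = A.add x (A.add y z)
  add_comm : ∀ x y, A.add x y = A.add y x
  add_zero : ∀ x, A.add x A.zero = x
  mul_assoc : ∀ x y z, A.mul (A.mul x y) z = A.mul x (A.mul y z)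
  mul_comm : ∀ x y, A.mul x y = A.mul y x
  mul_one : ∀ x, A.mul x A.one = x
  mul_zero : ∀ x, A.mul x A.zero = A.zero
  left_distrib : ∀ x y z, A.mul x (A.add y z) = A.add (A.mul x y) (A.mul x z)
  lt_irrefl : ∀ x, ¬ A.lt x x
  lt_trans : ∀ x y z, A.lt x y → A.lt y z → A.lt x z
  lt_total : ∀ x y, A.lt x y ∨ x = y ∨ A.lt y x
  add_lt_add_right : ∀ x y z, A.lt x y → A.lt (A.add x z) (A.add y z)
  mul_lt_mul_right : ∀ x y z, A.lt x y → A.lt A.zero z → A.lt (A.mul x z) (A.mul y z)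
  sub_exists : ∀ x y, (A.lt x y ∨ x = y) → ∃ z, A.add x z = y
  zero_le : ∀ x, x = A.zero ∨ A.lt A.zero x
  zero_lt_one : A.lt A.zero A.one
  lt_succ_self : ∀ x, A.lt x (A.add x A.one)
  discrete : ∀ x y, A.lt x y → (A.add x A.one = y ∨ A.lt (A.add x A.one) y)

/-- `A` is a model of the theory `T_tup`: the arithmetic sort satisfies `PA⁻` and the
tuple sort behaves as the sort of `N`-indexed sequences from `M`. -/
structure ModelsTtup (A : TupStr L) : Prop where
  pa : A.IsPAminus
  ind_lt : ∀ π i m, A.ind π i m → A.lt i (A.len π)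
  ind_unique : ∀ π i m m', A.ind π i m → A.ind π i m' → m = m'
  ind_total : ∀ π i, A.lt i (A.len π) → ∃ m, A.ind π i m
  ext : ∀ π ρ, A.len π = A.len ρ →
    (∀ i, A.lt i (A.len π) → ∃ m, A.ind π i m ∧ A.ind ρ i m) → π = ρ
  nil_exists : ∃ π, A.len π = A.zero
  snoc_exists : ∀ π m, ∃ ρ, A.len ρ = A.add (A.len π) A.one ∧ A.ind ρ (A.len π) m ∧
    ∀ i m', A.lt i (A.len π) → (A.ind π i m' ↔ A.ind ρ i m')
  trunc_exists : ∀ π, A.lt A.zero (A.len π) →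
    ∃ ρ, A.add (A.len ρ) A.one = A.len π ∧
      ∀ i m, A.lt i (A.len ρ) → (A.ind π i m ↔ A.ind ρ i m)

end TupStr

/-- The standard `τ*_tup`-structure `𝓜^{<ℕ}` over a `τ`-structure `M`, with standard
natural numbers, all finite tuples from `M`, a set `C ⊆ ℕ` interpreting `R`, and a
function `g` interpreting the function symbol `g`. -/
def stdTup (L : FirstOrder.Language.{0, 0}) (M : Type) (iM : L.Structure M)
    (C : Set ℕ) (g : ℕ → List M → M) : TupStr L where
  M := M
  strM := iM
  N := ℕ
  zero := 0
  one := 1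
  add := (· + ·)
  mul := (· * ·)
  lt := (· < ·)
  Tup := List M
  len := List.length
  ind := fun l i m => l[i]? = some m
  R := fun n => n ∈ C
  g := g

/-- Terms of the arithmetic sort `N`: variables, `0`, `1`, sums, products, and lengths
of tuple variables. -/
inductive NTerm : Type where
  | var : ℕ → NTerm
  | zero : NTerm
  | one : NTerm
  | add : NTerm → NTerm → NTerm
  | mul : NTerm → NTerm → NTerm
  | len : ℕ → NTerm

/-- Terms of the sort `M`: variables and applications of the function symbol `g` to an
`N`-term and a tuple variable. -/
inductive MTerm : Type where
  | var : ℕ → MTerm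
  | g : NTerm → ℕ → MTerm

variable {L : FirstOrder.Language.{0, 0}}

/-- Evaluation of `N`-terms. -/
def NTerm.eval (A : TupStr L) (vN : ℕ → A.N) (vT : ℕ → A.Tup) : NTerm → A.N
  | .var i => vN i
  | .zero => A.zero
  | .one => A.one
  | .add t u => A.add (t.eval A vN vT) (u.eval A vN vT)
  | .mul t u => A.mul (t.eval A vN vT) (u.eval A vN vT)
  | .len i => A.len (vT i)

/-- Evaluation of `M`-terms. -/
def MTerm.eval (A : TupStr L) (vM : ℕ → A.M) (vN : ℕ → A.N) (vT : ℕ → A.Tup) :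
    MTerm → A.M
  | .var i => vM i
  | .g t i => A.g (t.eval A vN vT) (vT i)

/-- Atomic `τ*_tup`-formulas. -/
inductive TAtom (L : FirstOrder.Language.{0, 0}) : Type where
  | meq : MTerm → MTerm → TAtom L
  | neq : NTerm → NTerm → TAtom L
  | nlt : NTerm → NTerm → TAtom L
  | teq : ℕ → ℕ → TAtom L
  | rel : {n : ℕ} → L.Relations n → (Fin n → MTerm) → TAtom L
  | ind : ℕ → NTerm → MTerm → TAtom L
  | R : NTerm → TAtom L

/-- Satisfaction of atomic `τ*_tup`-formulas. -/
def TAtom.Holds (A : TupStr L) (vM : ℕ → A.M) (vN : ℕ → A.N) (vT : ℕ → A.Tup) :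
    TAtom L → Prop
  | .meq t u => t.eval A vM vN vT = u.eval A vM vN vT
  | .neq t u => t.eval A vN vT = u.eval A vN vT
  | .nlt t u => A.lt (t.eval A vN vT) (u.eval A vN vT)
  | .teq i j => vT i = vT j
  | .rel r ts => @FirstOrder.Language.Structure.RelMap L A.M A.strM _ r
      (fun i => (ts i).eval A vM vN vT)
  | .ind i t s => A.ind (vT i) (t.eval A vN vT) (s.eval A vM vN vT)
  | .R t => A.R (t.eval A vN vT)

/-- Finitary quantifier-free `τ*_tup`-formulas. -/
inductive QFF (L : FirstOrder.Language.{0, 0}) : Type where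
  | fls : QFF L
  | atom : TAtom L → QFF L
  | not : QFF L → QFF L
  | and : QFF L → QFF L → QFF L
  | or : QFF L → QFF L → QFF L

/-- Satisfaction of quantifier-free `τ*_tup`-formulas. -/
def QFF.Holds (A : TupStr L) (vM : ℕ → A.M) (vN : ℕ → A.N) (vT : ℕ → A.Tup) :
    QFF L → Prop
  | .fls => False
  | .atom a => a.Holds A vM vN vT
  | .not ψ => ¬ ψ.Holds A vM vN vT
  | .and ψ χ => ψ.Holds A vM vN vT ∧ χ.Holds A vM vN vT
  | .or ψ χ => ψ.Holds A vM vN vT ∨ χ.Holds A vM vN vT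

/-- `Π₁` `τ*_tup`-formulas: built from quantifier-free formulas by arbitrary
quantification over the sort `M`, universal quantification over the sorts `N` and
`M_tup`, and bounded existential quantification over `N` and `M_tup`. -/
inductive Pi1 (L : FirstOrder.Language.{0, 0}) : Type where
  | qf : QFF L → Pi1 L
  | exM : ℕ → Pi1 L → Pi1 L
  | allM : ℕ → Pi1 L → Pi1 L
  | allN : ℕ → Pi1 L → Pi1 L
  | allT : ℕ → Pi1 L → Pi1 L
  | exNlt : ℕ → NTerm → Pi1 L → Pi1 L
  | exTlt : ℕ → NTerm → Pi1 L → Pi1 L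

/-- Satisfaction of `Π₁` `τ*_tup`-formulas. -/
def Pi1.Holds (A : TupStr L) :
    Pi1 L → (ℕ → A.M) → (ℕ → A.N) → (ℕ → A.Tup) → Prop
  | .qf ψ, vM, vN, vT => ψ.Holds A vM vN vT
  | .exM i φ, vM, vN, vT => ∃ a : A.M, φ.Holds A (Function.update vM i a) vN vT
  | .allM i φ, vM, vN, vT => ∀ a : A.M, φ.Holds A (Function.update vM i a) vN vT
  | .allN i φ, vM, vN, vT => ∀ b : A.N, φ.Holds A vM (Function.update vN i b) vT
  | .allT i φ, vM, vN, vT => ∀ π : A.Tup, φ.Holds A vM vN (Function.update vT i π)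
  | .exNlt i t φ, vM, vN, vT => ∃ b : A.N, A.lt b (t.eval A vN vT) ∧
      φ.Holds A vM (Function.update vN i b) vT
  | .exTlt i t φ, vM, vN, vT => ∃ π : A.Tup, A.lt (A.len π) (t.eval A vN vT) ∧
      φ.Holds A vM vN (Function.update vT i π)

/-- Free `N`-sort variables of an `N`-term. -/
def NTerm.fN : NTerm → Finset ℕ
  | .var i => {i}
  | .zero => ∅
  | .one => ∅
  | .add t u => t.fN ∪ u.fN
  | .mul t u => t.fN ∪ u.fN
  | .len _ => ∅

/-- Free tuple-sort variables of an `N`-term. -/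
def NTerm.fT : NTerm → Finset ℕ
  | .var _ => ∅
  | .zero => ∅
  | .one => ∅
  | .add t u => t.fT ∪ u.fT
  | .mul t u => t.fT ∪ u.fT
  | .len i => {i}

/-- Free `M`-sort variables of an `M`-term. -/
def MTerm.fM : MTerm → Finset ℕ
  | .var i => {i}
  | .g _ _ => ∅

/-- Free `N`-sort variables of an `M`-term. -/
def MTerm.fN : MTerm → Finset ℕ
  | .var _ => ∅
  | .g t _ => t.fN

/-- Free tuple-sort variables of an `M`-term. -/
def MTerm.fT : MTerm → Finset ℕ
  | .var _ => ∅
  | .g t i => insert i t.fT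

/-- Free `M`-sort variables of an atomic formula. -/
def TAtom.fM : TAtom L → Finset ℕ
  | .meq t u => t.fM ∪ u.fM
  | .neq _ _ => ∅
  | .nlt _ _ => ∅
  | .teq _ _ => ∅
  | .rel _ ts => Finset.univ.biUnion fun i => (ts i).fM
  | .ind _ _ s => s.fM
  | .R _ => ∅

/-- Free `N`-sort variables of an atomic formula. -/
def TAtom.fN : TAtom L → Finset ℕ
  | .meq t u => t.fN ∪ u.fN
  | .neq t u => t.fN ∪ u.fN
  | .nlt t u => t.fN ∪ u.fN
  | .teq _ _ => ∅
  | .rel _ ts => Finset.univ.biUnion fun i => (ts i).fN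
  | .ind _ t s => t.fN ∪ s.fN
  | .R t => t.fN

/-- Free tuple-sort variables of an atomic formula. -/
def TAtom.fT : TAtom L → Finset ℕ
  | .meq t u => t.fT ∪ u.fT
  | .neq t u => t.fT ∪ u.fT
  | .nlt t u => t.fT ∪ u.fT
  | .teq i j => {i, j}
  | .rel _ ts => Finset.univ.biUnion fun i => (ts i).fT
  | .ind i t s => insert i (t.fT ∪ s.fT)
  | .R t => t.fT

/-- Free `M`-sort variables of a quantifier-free formula. -/
def QFF.fM : QFF L → Finset ℕ
  | .fls => ∅
  | .atom a => a.fM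
  | .not ψ => ψ.fM
  | .and ψ χ => ψ.fM ∪ χ.fM
  | .or ψ χ => ψ.fM ∪ χ.fM

/-- Free `N`-sort variables of a quantifier-free formula. -/
def QFF.fN : QFF L → Finset ℕ
  | .fls => ∅
  | .atom a => a.fN
  | .not ψ => ψ.fN
  | .and ψ χ => ψ.fN ∪ χ.fN
  | .or ψ χ => ψ.fN ∪ χ.fN

/-- Free tuple-sort variables of a quantifier-free formula. -/
def QFF.fT : QFF L → Finset ℕ
  | .fls => ∅
  | .atom a => a.fT
  | .not ψ => ψ.fT
  | .and ψ χ => ψ.fT ∪ χ.fT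
  | .or ψ χ => ψ.fT ∪ χ.fT

/-- Free `M`-sort variables of a `Π₁` formula. -/
def Pi1.fM : Pi1 L → Finset ℕ
  | .qf ψ => ψ.fM
  | .exM i φ => φ.fM.erase i
  | .allM i φ => φ.fM.erase i
  | .allN _ φ => φ.fM
  | .allT _ φ => φ.fM
  | .exNlt _ _ φ => φ.fM
  | .exTlt _ _ φ => φ.fM

/-- Free `N`-sort variables of a `Π₁` formula. -/
def Pi1.fN : Pi1 L → Finset ℕ
  | .qf ψ => ψ.fN
  | .exM _ φ => φ.fN
  | .allM _ φ => φ.fN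
  | .allN i φ => φ.fN.erase i
  | .allT _ φ => φ.fN
  | .exNlt i t φ => t.fN ∪ φ.fN.erase i
  | .exTlt _ t φ => t.fN ∪ φ.fN

/-- Free tuple-sort variables of a `Π₁` formula. -/
def Pi1.fT : Pi1 L → Finset ℕ
  | .qf ψ => ψ.fT
  | .exM _ φ => φ.fT
  | .allM _ φ => φ.fT
  | .allN _ φ => φ.fT
  | .allT i φ => φ.fT.erase i
  | .exNlt _ t φ => t.fT ∪ φ.fT
  | .exTlt i t φ => t.fT ∪ φ.fT.erase i

/-- A `Π₁` sentence: a `Π₁` formula with no free variables of any sort. -/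
def Pi1.IsSentence (φ : Pi1 L) : Prop := φ.fM = ∅ ∧ φ.fN = ∅ ∧ φ.fT = ∅

/-- Satisfaction of a `Π₁` sentence (under every valuation). -/
def Pi1.Sat (A : TupStr L) (φ : Pi1 L) : Prop :=
  ∀ (vM : ℕ → A.M) (vN : ℕ → A.N) (vT : ℕ → A.Tup), φ.Holds A vM vN vT

/-- The atomic formula does not mention the relation symbol `R`. -/
def TAtom.NoR : TAtom L → Prop
  | .R _ => False
  | _ => True

/-- The quantifier-free formula does not mention the relation symbol `R`. -/
def QFF.NoR : QFF L → Prop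
  | .fls => True
  | .atom a => a.NoR
  | .not ψ => ψ.NoR
  | .and ψ χ => ψ.NoR ∧ χ.NoR
  | .or ψ χ => ψ.NoR ∧ χ.NoR

/-- The `Π₁` formula does not mention the relation symbol `R` (it is a formula of
`τ_tup ∪ {g}`). -/
def Pi1.NoR : Pi1 L → Prop
  | .qf ψ => ψ.NoR
  | .exM _ φ => φ.NoR
  | .allM _ φ => φ.NoR
  | .allN _ φ => φ.NoR
  | .allT _ φ => φ.NoR
  | .exNlt _ _ φ => φ.NoR
  | .exTlt _ _ φ => φ.NoR

/-- The canonical embedding data of `𝓜^{<ℕ}` into a `τ*_tup`-structure `A` with `M`-sort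
`A.M`: a pair of injections `ℕ → A.N` and `List A.M → A.Tup`, the identity on the sort
`M`, preserving the arithmetic structure, lengths, and the indexing relation. (The
relation `R ∩ ℕ` and the restriction of `g` on `𝓜^{<ℕ}` are by definition the pullbacks
along the embedding, so they are automatically preserved.) -/
def IsStdEmb (A : TupStr L) (e : (ℕ → A.N) × (List A.M → A.Tup)) : Prop :=
  Function.Injective e.1 ∧ Function.Injective e.2 ∧
  e.1 0 = A.zero ∧ e.1 1 = A.one ∧
  (∀ m n : ℕ, e.1 (m + n) = A.add (e.1 m) (e.1 n)) ∧
  (∀ m n : ℕ, e.1 (m * n) = A.mul (e.1 m) (e.1 n)) ∧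
  (∀ m n : ℕ, m < n ↔ A.lt (e.1 m) (e.1 n)) ∧
  (∀ l : List A.M, A.len (e.2 l) = e.1 l.length) ∧
  (∀ (l : List A.M) (i : ℕ) (m : A.M), A.ind (e.2 l) (e.1 i) m ↔ l[i]? = some m)

section Aux

variable {L : FirstOrder.Language.{0, 0}} {A : TupStr L}

lemma std_seg (pa : A.IsPAminus) (e1 : ℕ → A.N)
    (h0 : e1 0 = A.zero) (h1 : e1 1 = A.one)
    (hadd : ∀ m n : ℕ, e1 (m + n) = A.add (e1 m) (e1 n))
    (hlt : ∀ m n : ℕ, m < n ↔ A.lt (e1 m) (e1 n)) :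
    ∀ n b, A.lt b (e1 n) → ∃ k, k < n ∧ b = e1 k := by
  intro n
  induction n with
  | zero =>
    intro b hb
    rw [h0] at hb
    exfalso
    rcases pa.zero_le b with h | h
    · exact pa.lt_irrefl _ (h ▸ hb)
    · exact pa.lt_irrefl _ (pa.lt_trans _ _ _ h hb)
  | succ n ih =>
    intro b hb
    have hsucc : e1 (n + 1) = A.add (e1 n) A.one := by rw [hadd, h1]
    rcases pa.lt_total b (e1 n) with h | h | h
    · obtain ⟨k, hk, rfl⟩ := ih b h
      exact ⟨k, Nat.lt_succ_of_lt hk, rfl⟩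
    · exact ⟨n, n.lt_succ_self, h⟩
    · exfalso
      rw [hsucc] at hb
      rcases pa.discrete _ _ h with h' | h'
      · rw [h'] at hb; exact pa.lt_irrefl _ hb
      · exact pa.lt_irrefl _ (pa.lt_trans _ _ _ hb h')

lemma tup_std (hA : A.ModelsTtup) (e : (ℕ → A.N) × (List A.M → A.Tup))
    (he : IsStdEmb A e) (π : A.Tup) (k : ℕ) (hk : A.len π = e.1 k) :
    ∃ l : List A.M, l.length = k ∧ e.2 l = π := by
  obtain ⟨i1, i2, h0, h1, hadd, hmul, hlt, hlen, hind⟩ := he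
  have hmem : ∀ i : Fin k, A.lt (e.1 i) (A.len π) := fun i => hk ▸ (hlt i k).mp i.isLt
  have hf : ∀ i : Fin k, A.ind π (e.1 i)
      (Classical.choose (hA.ind_total π (e.1 i) (hmem i))) :=
    fun i => Classical.choose_spec (hA.ind_total π (e.1 i) (hmem i))
  refine ⟨List.ofFn (fun i => Classical.choose (hA.ind_total π (e.1 i) (hmem i))),
    by simp, ?_⟩
  apply hA.ext
  · rw [hlen, List.length_ofFn, hk]
  · intro i hi
    rw [hlen, List.length_ofFn] at hi
    obtain ⟨j, hj, rfl⟩ := std_seg hA.pa e.1 h0 h1 hadd hlt k i hi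
    refine ⟨_, ?_, hf ⟨j, hj⟩⟩
    rw [hind]
    simp [List.getElem?_ofFn, List.ofFnNthVal, hj]

section Transfer

variable (A)

lemma neval_emb (e : (ℕ → A.N) × (List A.M → A.Tup)) (he : IsStdEmb A e)
    (C : Set ℕ) (g : ℕ → List A.M → A.M) (vN : ℕ → ℕ) (vT : ℕ → List A.M) (t : NTerm) :
    t.eval A (fun i => e.1 (vN i)) (fun i => e.2 (vT i)) =
      e.1 (t.eval (stdTup L A.M A.strM C g) vN vT) := by
  obtain ⟨i1, i2, h0, h1, hadd, hmul, hlt, hlen, hind⟩ := he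
  induction t with
  | var i => rfl
  | zero => exact h0.symm
  | one => exact h1.symm
  | add t u iht ihu => simp [NTerm.eval, iht, ihu, hadd, stdTup]
  | mul t u iht ihu => simp [NTerm.eval, iht, ihu, hmul, stdTup]
  | len i => exact hlen (vT i)

lemma meval_emb (e : (ℕ → A.N) × (List A.M → A.Tup)) (he : IsStdEmb A e) (vM : ℕ → A.M) (vN : ℕ → ℕ) (vT : ℕ → List A.M) (t : MTerm) :
    t.eval A vM (fun i => e.1 (vN i)) (fun i => e.2 (vT i)) =
      t.eval (stdTup L A.M A.strM {n : ℕ | A.R (e.1 n)}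
        (fun n l => A.g (e.1 n) (e.2 l))) vM vN vT := by
  cases t with
  | var i => rfl
  | g t i =>
    show A.g _ _ = A.g _ _
    rw [neval_emb A e he _ _ vN vT t]

lemma atom_emb (e : (ℕ → A.N) × (List A.M → A.Tup)) (he : IsStdEmb A e) (vM : ℕ → A.M) (vN : ℕ → ℕ) (vT : ℕ → List A.M) (a : TAtom L) :
    a.Holds A vM (fun i => e.1 (vN i)) (fun i => e.2 (vT i)) ↔
      a.Holds (stdTup L A.M A.strM {n : ℕ | A.R (e.1 n)}
        (fun n l => A.g (e.1 n) (e.2 l))) vM vN vT := by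
  obtain ⟨i1, i2, h0, h1, hadd, hmul, hlt, hlen, hind⟩ := he
  have he' : IsStdEmb A e := ⟨i1, i2, h0, h1, hadd, hmul, hlt, hlen, hind⟩
  cases a with
  | meq t u =>
    show _ = _ ↔ _ = _
    rw [meval_emb A e he', meval_emb A e he']
    exact Iff.rfl
  | neq t u =>
    show _ = _ ↔ _ = _
    rw [neval_emb A e he' _ _ _ _ t, neval_emb A e he' _ _ _ _ u]
    exact ⟨fun h => i1 h, fun h => congrArg e.1 h⟩
  | nlt t u =>
    show A.lt _ _ ↔ _ < _
    rw [neval_emb A e he' _ _ _ _ t, neval_emb A e he' _ _ _ _ u]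
    exact (hlt _ _).symm
  | teq i j =>
    show e.2 (vT i) = e.2 (vT j) ↔ vT i = vT j
    exact ⟨fun h => i2 h, fun h => congrArg e.2 h⟩
  | rel r ts =>
    simp only [TAtom.Holds]
    exact iff_of_eq (congrArg _ (funext fun i => meval_emb A e he' _ _ _ (ts i)))
  | ind i t s =>
    show A.ind _ _ _ ↔ _
    rw [neval_emb A e he' _ _ _ _ t, meval_emb A e he']
    exact hind _ _ _
  | R t =>
    show A.R _ ↔ _
    rw [neval_emb A e he' _ _ _ _ t]
    exact Iff.rfl

lemma qff_emb (e : (ℕ → A.N) × (List A.M → A.Tup)) (he : IsStdEmb A e) (vM : ℕ → A.M) (vN : ℕ → ℕ) (vT : ℕ → List A.M) (ψ : QFF L) :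
    ψ.Holds A vM (fun i => e.1 (vN i)) (fun i => e.2 (vT i)) ↔
      ψ.Holds (stdTup L A.M A.strM {n : ℕ | A.R (e.1 n)}
        (fun n l => A.g (e.1 n) (e.2 l))) vM vN vT := by
  induction ψ with
  | fls => exact Iff.rfl
  | atom a => exact atom_emb A e he vM vN vT a
  | not ψ ih => exact not_congr ih
  | and ψ χ ihψ ihχ => exact and_congr ihψ ihχ
  | or ψ χ ihψ ihχ => exact or_congr ihψ ihχ

end Transfer

lemma update_comp_emb {α β : Type} (f : α → β) (v : ℕ → α) (i : ℕ) (b : α) :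
    (fun j => f (Function.update v i b j)) = Function.update (fun j => f (v j)) i (f b) := by
  funext j
  simp only [Function.update_apply]
  split <;> rfl

end Aux
/-- Let `A` be a `τ*_tup`-structure which is a model of `T_tup` whose
`M`-sort equals the `τ`-structure `𝓜 = A.M`, and identify `𝓜^{<ℕ}` with its canonical
image in `A` (given by an embedding `e`). Let `φ` be a `Π₁` `τ*_tup`-formula and let the
parameters (valuations) come from `𝓜^{<ℕ}`. If `A ⊨ φ` at these parameters, then
`(𝓜^{<ℕ}, R ∩ ℕ, g ↾ ℕ × M^{<ℕ}) ⊨ φ` at the same parameters. -/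
theorem pi1_reflects_to_std {L : FirstOrder.Language.{0, 0}}
    (A : TupStr L) (hA : A.ModelsTtup)
    (e : (ℕ → A.N) × (List A.M → A.Tup)) (he : IsStdEmb A e)
    (φ : Pi1 L) (vM : ℕ → A.M) (vN : ℕ → ℕ) (vT : ℕ → List A.M)
    (h : φ.Holds A vM (fun i => e.1 (vN i)) (fun i => e.2 (vT i))) :
    φ.Holds (stdTup L A.M A.strM {n : ℕ | A.R (e.1 n)} (fun n l => A.g (e.1 n) (e.2 l)))
      vM vN vT := by
  obtain ⟨i1, i2, h0, h1, hadd, hmul, hlt, hlen, hind⟩ := he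
  have he' : IsStdEmb A e := ⟨i1, i2, h0, h1, hadd, hmul, hlt, hlen, hind⟩
  induction φ generalizing vM vN vT with
  | qf ψ => exact (qff_emb A e he' vM vN vT ψ).mp h
  | exM i φ ih =>
    obtain ⟨a, ha⟩ := h
    exact ⟨a, ih _ _ _ ha⟩
  | allM i φ ih => exact fun a => ih _ _ _ (h a)
  | allN i φ ih =>
    intro b
    apply ih
    have hb := h (e.1 b)
    rwa [← update_comp_emb e.1 vN i b] at hb
  | allT i φ ih =>
    intro π
    apply ih
    have hπ := h (e.2 π)
    rwa [← update_comp_emb e.2 vT i π] at hπ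
  | exNlt i t φ ih =>
    obtain ⟨b, hb, hφ⟩ := h
    rw [neval_emb A e he' {n : ℕ | A.R (e.1 n)} (fun n l => A.g (e.1 n) (e.2 l)) vN vT t]
      at hb
    obtain ⟨k, _, rfl⟩ := std_seg hA.pa e.1 h0 h1 hadd hlt _ b hb
    refine ⟨k, (hlt _ _).mpr hb, ?_⟩
    apply ih
    rwa [← update_comp_emb e.1 vN i k] at hφ
  | exTlt i t φ ih =>
    obtain ⟨π, hπ, hφ⟩ := h
    rw [neval_emb A e he' {n : ℕ | A.R (e.1 n)} (fun n l => A.g (e.1 n) (e.2 l)) vN vT t]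
      at hπ
    obtain ⟨k, hk, hlenk⟩ := std_seg hA.pa e.1 h0 h1 hadd hlt _ (A.len π) hπ
    obtain ⟨l, hl, rfl⟩ := tup_std hA e he' π k hlenk
    refine ⟨l, ?_, ?_⟩
    · show l.length < _
      rw [hl]; exact hk
    · apply ih
      rwa [← update_comp_emb e.2 vT i l] at hφ

end PaperCDH
end
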